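/- arXiv:1403.3348 — 3 statements merged into one kernel-verified Lean document; each statement's English description precedes it below -/
import Mathlib

section
/- Let X be a Banach space and let E be a Banach lattice with property (d). A bounded linear operator T : X → E is almost limited if and only if ‖T*(f_n)‖ → 0 for every weak* null sequence (f_n) in the dual E* consisting of positive and pairwise disjoint elements. -/
open Filter Topology Metric Set NormedSpace BoundedContinuousFunction

noncomputable section

/-- The value `|f| x` of the modulus of a functional `f` in the dual of a Banach lattice,
at a positive element `x`, given by the Riesz–Kantorovich formula. -/
def dualAbs {E : Type*} [NormedAddCommGroup E] [Lattice E] [HasSolidNorm E] [IsOrderedAddMonoid E] [NormedSpace ℝ E]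
    (f : E →L[ℝ] ℝ) (x : E) : ℝ :=
  sSup {r : ℝ | ∃ z : E, |z| ≤ x ∧ r = |f z|}

/-- Two functionals `f, g` on a Banach lattice are disjoint, i.e. `|f| ⊓ |g| = 0` in the dual
lattice; by the Riesz–Kantorovich formula this means that for every `x ≥ 0` the infimum of
`|f| y + |g| (x - y)` over `0 ≤ y ≤ x` is `0`. -/
def DualDisjoint {E : Type*} [NormedAddCommGroup E] [Lattice E] [HasSolidNorm E] [IsOrderedAddMonoid E] [NormedSpace ℝ E]
    (f g : E →L[ℝ] ℝ) : Prop :=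
  ∀ x : E, 0 ≤ x → ∀ ε : ℝ, 0 < ε →
    ∃ y : E, 0 ≤ y ∧ y ≤ x ∧ dualAbs f y + dualAbs g (x - y) < ε

/-- A sequence of functionals is weak* null if it converges to `0` pointwise. -/
def WeakStarNull {E : Type*} [NormedAddCommGroup E] [NormedSpace ℝ E]
    (f : ℕ → E →L[ℝ] ℝ) : Prop :=
  ∀ x : E, Tendsto (fun n => f n x) atTop (𝓝 0)

/-- A functional on a Banach lattice is positive if it is nonnegative on the positive cone. -/
def PositiveFunctional {E : Type*} [NormedAddCommGroup E] [Lattice E] [HasSolidNorm E] [IsOrderedAddMonoid E] [NormedSpace ℝ E]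
    (f : E →L[ℝ] ℝ) : Prop :=
  ∀ x : E, 0 ≤ x → 0 ≤ f x

/-- An operator between Banach lattices is positive if it maps the positive cone into
the positive cone. -/
def IsPositiveOp {E F : Type*} [NormedAddCommGroup E] [Lattice E] [HasSolidNorm E] [IsOrderedAddMonoid E] [NormedSpace ℝ E]
    [NormedAddCommGroup F] [Lattice F] [HasSolidNorm F] [IsOrderedAddMonoid F] [NormedSpace ℝ F] (T : E →L[ℝ] F) : Prop :=
  ∀ x : E, 0 ≤ x → 0 ≤ T x

/-- An operator `T : X → E` into a Banach lattice is almost limited if `‖T* fₙ‖ → 0` for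
every disjoint weak* null sequence `(fₙ)` in `E*`. -/
def AlmostLimited {X E : Type*} [NormedAddCommGroup X] [NormedSpace ℝ X]
    [NormedAddCommGroup E] [Lattice E] [HasSolidNorm E] [IsOrderedAddMonoid E] [NormedSpace ℝ E] (T : X →L[ℝ] E) : Prop :=
  ∀ f : ℕ → E →L[ℝ] ℝ, WeakStarNull f → Pairwise (fun n m => DualDisjoint (f n) (f m)) →
    Tendsto (fun n => ‖(f n).comp T‖) atTop (𝓝 0)

/-- A Banach lattice `E` has property (d) if `|fₙ| → 0` in the weak* topology for every
disjoint weak* null sequence `(fₙ)` in `E*` (it suffices to test `|fₙ|` on the positive cone). -/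
def PropertyD (E : Type*) [NormedAddCommGroup E] [Lattice E] [HasSolidNorm E] [IsOrderedAddMonoid E] [NormedSpace ℝ E] : Prop :=
  ∀ f : ℕ → E →L[ℝ] ℝ, WeakStarNull f → Pairwise (fun n m => DualDisjoint (f n) (f m)) →
    ∀ x : E, 0 ≤ x → Tendsto (fun n => dualAbs (f n) x) atTop (𝓝 0)

/-- A Banach lattice `E` has the dual positive Schur property if every weak* null sequence of
positive functionals is norm null. -/
def DualPositiveSchur (E : Type*) [NormedAddCommGroup E] [Lattice E] [HasSolidNorm E] [IsOrderedAddMonoid E] [NormedSpace ℝ E] : Prop :=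
  ∀ f : ℕ → E →L[ℝ] ℝ, WeakStarNull f → (∀ n, PositiveFunctional (f n)) →
    Tendsto (fun n => ‖f n‖) atTop (𝓝 0)

/-- A Banach lattice `F` has the positive Schur property if every weakly null sequence of
positive elements is norm null. -/
def PositiveSchur (F : Type*) [NormedAddCommGroup F] [Lattice F] [HasSolidNorm F] [IsOrderedAddMonoid F] [NormedSpace ℝ F] : Prop :=
  ∀ x : ℕ → F, (∀ g : F →L[ℝ] ℝ, Tendsto (fun n => g (x n)) atTop (𝓝 0)) →
    (∀ n, 0 ≤ x n) → Tendsto (fun n => ‖x n‖) atTop (𝓝 0)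

/-- An operator is weakly compact if the image of the closed unit ball is relatively
compact in the weak topology. -/
def IsWeaklyCompactOp {X Y : Type*} [NormedAddCommGroup X] [NormedSpace ℝ X]
    [NormedAddCommGroup Y] [NormedSpace ℝ Y] (T : X →L[ℝ] Y) : Prop :=
  IsCompact (closure (toWeakSpaceCLM ℝ Y '' (T '' closedBall 0 1)))

/-- A lattice is σ-Dedekind complete if every countable nonempty order-bounded subset has a
supremum. -/
def SigmaDedekindComplete (E : Type*) [Lattice E] : Prop :=
  ∀ s : Set E, s.Countable → s.Nonempty → BddAbove s → ∃ a, IsLUB s a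

/-- The norm of a Banach lattice is order continuous if `x_α ↓ 0` implies `‖x_α‖ ↓ 0`,
for every decreasing net `(x_α)` with infimum `0`. -/
def HasOrderContinuousNorm (E : Type*) [NormedAddCommGroup E] [Lattice E] [HasSolidNorm E] [IsOrderedAddMonoid E] : Prop :=
  ∀ ⦃ι : Type*⦄ [Preorder ι] [Nonempty ι] [IsDirected ι (· ≤ ·)] (x : ι → E),
    Antitone x → IsGLB (Set.range x) 0 → Tendsto (fun i => ‖x i‖) atTop (𝓝 0)

/-- A Banach space is reflexive if the canonical embedding into its double dual is
surjective. -/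
def ReflexiveSpace (X : Type*) [NormedAddCommGroup X] [NormedSpace ℝ X] : Prop :=
  Function.Surjective (inclusionInDoubleDual ℝ X)

/-- The Banach lattice `ℓ^∞` of bounded real sequences. -/
abbrev LinftySeq : Type := ℕ →ᵇ ℝ

section AuxAL

variable {E : Type*} [NormedAddCommGroup E] [Lattice E] [HasSolidNorm E] [IsOrderedAddMonoid E] [NormedSpace ℝ E]

namespace AuxAL

lemma mem_S {f : E →L[ℝ] ℝ} {x z : E} (hz : |z| ≤ x) :
    |f z| ∈ {r : ℝ | ∃ z : E, |z| ≤ x ∧ r = |f z|} := ⟨z, hz, rfl⟩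

lemma S_nonempty (f : E →L[ℝ] ℝ) {x : E} (hx : 0 ≤ x) :
    {r : ℝ | ∃ z : E, |z| ≤ x ∧ r = |f z|}.Nonempty :=
  ⟨|f 0|, 0, by simpa using hx, rfl⟩

lemma S_bddAbove (f : E →L[ℝ] ℝ) {x : E} (hx : 0 ≤ x) :
    BddAbove {r : ℝ | ∃ z : E, |z| ≤ x ∧ r = |f z|} := by
  refine ⟨‖f‖ * ‖x‖, fun r hr => ?_⟩
  obtain ⟨z, hz, rfl⟩ := hr
  have h1 : ‖z‖ ≤ ‖x‖ := norm_le_norm_of_abs_le_abs (by rwa [abs_of_nonneg hx])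
  calc |f z| = ‖f z‖ := (Real.norm_eq_abs _).symm
    _ ≤ ‖f‖ * ‖z‖ := f.le_opNorm z
    _ ≤ ‖f‖ * ‖x‖ := by nlinarith [norm_nonneg f]

lemma le_dualAbs {f : E →L[ℝ] ℝ} {x z : E} (hx : 0 ≤ x) (hz : |z| ≤ x) :
    |f z| ≤ dualAbs f x :=
  le_csSup (S_bddAbove f hx) (mem_S hz)

lemma dualAbs_nonneg {f : E →L[ℝ] ℝ} {x : E} (hx : 0 ≤ x) : 0 ≤ dualAbs f x := by
  simpa using le_dualAbs (f := f) hx (z := 0) (by simpa using hx)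

lemma dualAbs_le {f : E →L[ℝ] ℝ} {x : E} {c : ℝ} (hx : 0 ≤ x)
    (h : ∀ z : E, |z| ≤ x → |f z| ≤ c) : dualAbs f x ≤ c := by
  refine csSup_le (S_nonempty f hx) ?_
  rintro r ⟨z, hz, rfl⟩
  exact h z hz

lemma dualAbs_le_norm (f : E →L[ℝ] ℝ) {x : E} (hx : 0 ≤ x) :
    dualAbs f x ≤ ‖f‖ * ‖x‖ := by
  refine dualAbs_le hx fun z hz => ?_
  have h1 : ‖z‖ ≤ ‖x‖ := norm_le_norm_of_abs_le_abs (by rwa [abs_of_nonneg hx])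
  calc |f z| = ‖f z‖ := (Real.norm_eq_abs _).symm
    _ ≤ ‖f‖ * ‖z‖ := f.le_opNorm z
    _ ≤ ‖f‖ * ‖x‖ := by nlinarith [norm_nonneg f]

lemma dualAbs_mono {f : E →L[ℝ] ℝ} {x y : E} (hx : 0 ≤ x) (hxy : x ≤ y) :
    dualAbs f x ≤ dualAbs f y :=
  dualAbs_le hx fun z hz => le_dualAbs (hx.trans hxy) (hz.trans hxy)

lemma abs_apply_le_dualAbs {f : E →L[ℝ] ℝ} {x : E} (hx : 0 ≤ x) :
    |f x| ≤ dualAbs f x :=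
  le_dualAbs hx (by rw [abs_of_nonneg hx])

lemma dualAbs_zero (f : E →L[ℝ] ℝ) : dualAbs f 0 = 0 :=
  le_antisymm (by simpa using dualAbs_le_norm f (x := 0) le_rfl)
    (dualAbs_nonneg le_rfl)

lemma dualAbs_add (f : E →L[ℝ] ℝ) {x y : E} (hx : 0 ≤ x) (hy : 0 ≤ y) :
    dualAbs f (x + y) = dualAbs f x + dualAbs f y := by
  have hxy : (0 : E) ≤ x + y := add_nonneg hx hy
  refine le_antisymm ?_ ?_
  · -- Riesz decomposition
    refine dualAbs_le hxy fun z hz => ?_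
    set u : E := (z ⊔ -x) ⊓ x with hu
    have hnegx : -x ≤ (0 : E) := neg_nonpos.2 hx
    have hu1 : |u| ≤ x := by
      have hlo : -x ≤ u := le_inf le_sup_right (hnegx.trans hx)
      exact abs_le'.2 ⟨inf_le_right, neg_le.2 hlo⟩
    have hzxy : z ≤ x + y := (le_abs_self z).trans hz
    have hzxy' : -z ≤ x + y := (neg_le_abs z).trans hz
    have hv1 : |z - u| ≤ y := by
      have hA : z - u ≤ y := by
        -- z - y ≤ u
        have h1 : z - y ≤ z ⊔ -x := le_trans (sub_le_self z hy) le_sup_left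
        have h2 : z - y ≤ x := sub_le_iff_le_add.2 hzxy
        have h3 : z ≤ u + y := sub_le_iff_le_add.1 (le_inf h1 h2)
        exact sub_le_iff_le_add.2 (by rwa [add_comm u y] at h3)
      have hB : -(z - u) ≤ y := by
        -- u ≤ z + y
        have h1 : z ⊔ -x ≤ z + y := by
          refine sup_le (le_add_of_nonneg_right hy) ?_
          have h2 : -(x + y) ≤ z := neg_le.1 hzxy'
          have h3 : -x - y ≤ z := by rwa [neg_add, ← sub_eq_add_neg] at h2
          exact sub_le_iff_le_add.1 h3
        have h4 : u ≤ z + y := le_trans inf_le_left h1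
        rw [neg_sub]
        exact sub_le_iff_le_add.2 (by rwa [add_comm z y] at h4)
      exact abs_le'.2 ⟨hA, hB⟩
    have hzsplit : u + (z - u) = z := by abel
    have hfz : f z = f u + f (z - u) := by
      conv_lhs => rw [← hzsplit]
      exact map_add f u (z - u)
    calc |f z| = |f u + f (z - u)| := by rw [hfz]
      _ ≤ |f u| + |f (z - u)| := abs_add_le _ _
      _ ≤ dualAbs f x + dualAbs f y :=
        add_le_add (le_dualAbs hx hu1) (le_dualAbs hy hv1)
  · -- superadditivity
    have key : ∀ z1 : E, |z1| ≤ x → ∀ z2 : E, |z2| ≤ y →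
        |f z1| + |f z2| ≤ dualAbs f (x + y) := by
      intro z1 hz1 z2 hz2
      set w1 : E := if 0 ≤ f z1 then z1 else -z1 with hw1
      set w2 : E := if 0 ≤ f z2 then z2 else -z2 with hw2
      have e1 : f w1 = |f z1| := by
        rw [hw1]; split_ifs with h
        · exact (abs_of_nonneg h).symm
        · rw [map_neg]; exact (abs_of_neg (not_le.1 h)).symm
      have e2 : f w2 = |f z2| := by
        rw [hw2]; split_ifs with h
        · exact (abs_of_nonneg h).symm
        · rw [map_neg]; exact (abs_of_neg (not_le.1 h)).symm
      have a1 : |w1| ≤ x := by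
        rw [hw1]; split_ifs with h
        · exact hz1
        · rwa [abs_neg]
      have a2 : |w2| ≤ y := by
        rw [hw2]; split_ifs with h
        · exact hz2
        · rwa [abs_neg]
      have a3 : |w1 + w2| ≤ x + y := (abs_add_le _ _).trans (add_le_add a1 a2)
      calc |f z1| + |f z2| = f (w1 + w2) := by rw [map_add, e1, e2]
        _ ≤ |f (w1 + w2)| := le_abs_self _
        _ ≤ dualAbs f (x + y) := le_dualAbs hxy a3
    have h1 : dualAbs f x ≤ dualAbs f (x + y) - dualAbs f y := by
      refine dualAbs_le hx fun z1 hz1 => ?_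
      have h2 : dualAbs f y ≤ dualAbs f (x + y) - |f z1| := by
        refine dualAbs_le hy fun z2 hz2 => ?_
        linarith [key z1 hz1 z2 hz2]
      linarith
    linarith

/-- `|f|` as a function: `dualAbs f x⁺ - dualAbs f x⁻`. -/
def aFun (f : E →L[ℝ] ℝ) (x : E) : ℝ := dualAbs f x⁺ - dualAbs f x⁻

lemma aFun_of_nonneg (f : E →L[ℝ] ℝ) {x : E} (hx : 0 ≤ x) :
    aFun f x = dualAbs f x := by
  rw [aFun, posPart_eq_self.2 hx, negPart_eq_zero.2 hx, dualAbs_zero, sub_zero]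

lemma aFun_add (f : E →L[ℝ] ℝ) (x y : E) :
    aFun f (x + y) = aFun f x + aFun f y := by
  have key : (x + y)⁺ + (x⁻ + y⁻) = (x + y)⁻ + (x⁺ + y⁺) := by
    have e1 : (x + y)⁺ = (x + y) + (x + y)⁻ := sub_eq_iff_eq_add.1 (posPart_sub_negPart _)
    have e2 : x⁺ = x + x⁻ := sub_eq_iff_eq_add.1 (posPart_sub_negPart _)
    have e3 : y⁺ = y + y⁻ := sub_eq_iff_eq_add.1 (posPart_sub_negPart _)
    rw [e1, e2, e3]; abel
  have h1 := congrArg (dualAbs f) key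
  rw [dualAbs_add f (posPart_nonneg _) (add_nonneg (negPart_nonneg _) (negPart_nonneg _)),
    dualAbs_add f (negPart_nonneg _) (add_nonneg (posPart_nonneg _) (posPart_nonneg _)),
    dualAbs_add f (negPart_nonneg x) (negPart_nonneg y),
    dualAbs_add f (posPart_nonneg x) (posPart_nonneg y)] at h1
  simp only [aFun]
  linarith

lemma posPart_le_abs' (x : E) : x⁺ ≤ |x| := by
  rw [posPart_def]
  exact sup_le (le_abs_self x) (abs_nonneg x)

lemma negPart_le_abs' (x : E) : x⁻ ≤ |x| := by
  rw [negPart_def]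
  exact sup_le (neg_le_abs x) (abs_nonneg x)

lemma aFun_bound (f : E →L[ℝ] ℝ) (x : E) : |aFun f x| ≤ ‖f‖ * ‖x‖ := by
  have hM : dualAbs f |x| ≤ ‖f‖ * ‖x‖ := by
    have := dualAbs_le_norm f (x := |x|) (abs_nonneg x)
    rwa [norm_abs_eq_norm] at this
  have h1 : dualAbs f x⁺ ≤ dualAbs f |x| := dualAbs_mono (posPart_nonneg x) (posPart_le_abs' x)
  have h2 : dualAbs f x⁻ ≤ dualAbs f |x| := dualAbs_mono (negPart_nonneg x) (negPart_le_abs' x)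
  have h3 : 0 ≤ dualAbs f x⁺ := dualAbs_nonneg (posPart_nonneg x)
  have h4 : 0 ≤ dualAbs f x⁻ := dualAbs_nonneg (negPart_nonneg x)
  rw [aFun]
  rw [abs_le]
  constructor <;> linarith

/-- `|f|` as a continuous linear functional. -/
def absCLM (f : E →L[ℝ] ℝ) : E →L[ℝ] ℝ :=
  AddMonoidHom.toRealLinearMap (AddMonoidHom.mk' (aFun f) (aFun_add f))
    (AddMonoidHomClass.lipschitz_of_bound (AddMonoidHom.mk' (aFun f) (aFun_add f)) ‖f‖
      (fun x => by simpa [Real.norm_eq_abs] using aFun_bound f x)).continuous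

lemma absCLM_apply (f : E →L[ℝ] ℝ) (x : E) : absCLM f x = aFun f x := rfl

lemma absCLM_of_nonneg (f : E →L[ℝ] ℝ) {x : E} (hx : 0 ≤ x) :
    absCLM f x = dualAbs f x := by
  rw [absCLM_apply, aFun_of_nonneg f hx]

/-- The positive part `f⁺ = (|f| + f)/2` of a functional. -/
def fplus (f : E →L[ℝ] ℝ) : E →L[ℝ] ℝ := (1/2 : ℝ) • (absCLM f + f)

/-- The negative part `f⁻ = (|f| - f)/2` of a functional. -/
def fminus (f : E →L[ℝ] ℝ) : E →L[ℝ] ℝ := (1/2 : ℝ) • (absCLM f - f)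

lemma fplus_apply (f : E →L[ℝ] ℝ) (x : E) :
    fplus f x = (absCLM f x + f x) / 2 := by
  simp [fplus]; ring

lemma fminus_apply (f : E →L[ℝ] ℝ) (x : E) :
    fminus f x = (absCLM f x - f x) / 2 := by
  simp [fminus]; ring

lemma fplus_sub_fminus (f : E →L[ℝ] ℝ) : fplus f - fminus f = f := by
  ext x
  simp [fplus_apply, fminus_apply]
  ring

lemma fplus_pos (f : E →L[ℝ] ℝ) : PositiveFunctional (fplus f) := by
  intro x hx
  rw [fplus_apply, absCLM_of_nonneg f hx]
  have h1 : |f x| ≤ dualAbs f x := abs_apply_le_dualAbs hx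
  have h2 : -f x ≤ |f x| := neg_le_abs _
  linarith

lemma fminus_pos (f : E →L[ℝ] ℝ) : PositiveFunctional (fminus f) := by
  intro x hx
  rw [fminus_apply, absCLM_of_nonneg f hx]
  have h1 : |f x| ≤ dualAbs f x := abs_apply_le_dualAbs hx
  have h2 : f x ≤ |f x| := le_abs_self _
  linarith

lemma absCLM_abs_le {f : E →L[ℝ] ℝ} {z y : E} (hy : 0 ≤ y) (hz : |z| ≤ y) :
    |absCLM f z| ≤ dualAbs f y := by
  have h1 : dualAbs f z⁺ ≤ dualAbs f y :=
    dualAbs_mono (posPart_nonneg z) ((posPart_le_abs' z).trans hz)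
  have h2 : dualAbs f z⁻ ≤ dualAbs f y :=
    dualAbs_mono (negPart_nonneg z) ((negPart_le_abs' z).trans hz)
  have h3 : 0 ≤ dualAbs f z⁺ := dualAbs_nonneg (posPart_nonneg z)
  have h4 : 0 ≤ dualAbs f z⁻ := dualAbs_nonneg (negPart_nonneg z)
  rw [absCLM_apply, abs_le]
  unfold aFun
  constructor <;> linarith

lemma dualAbs_fplus_le (f : E →L[ℝ] ℝ) {y : E} (hy : 0 ≤ y) :
    dualAbs (fplus f) y ≤ dualAbs f y := by
  refine dualAbs_le hy fun z hz => ?_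
  have h1 : |absCLM f z| ≤ dualAbs f y := absCLM_abs_le hy hz
  have h2 : |f z| ≤ dualAbs f y := le_dualAbs hy hz
  have h3 : |absCLM f z + f z| ≤ 2 * dualAbs f y := (abs_add_le _ _).trans (by linarith)
  rw [fplus_apply, abs_div, abs_two, div_le_iff₀ (by norm_num : (0:ℝ) < 2)]
  linarith

lemma dualAbs_fminus_le (f : E →L[ℝ] ℝ) {y : E} (hy : 0 ≤ y) :
    dualAbs (fminus f) y ≤ dualAbs f y := by
  refine dualAbs_le hy fun z hz => ?_
  have h1 : |absCLM f z| ≤ dualAbs f y := absCLM_abs_le hy hz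
  have h2 : |f z| ≤ dualAbs f y := le_dualAbs hy hz
  have h3 : |absCLM f z - f z| ≤ 2 * dualAbs f y := (abs_sub _ _).trans (by linarith)
  rw [fminus_apply, abs_div, abs_two, div_le_iff₀ (by norm_num : (0:ℝ) < 2)]
  linarith

lemma disjoint_transfer {f g : E →L[ℝ] ℝ} {f' g' : E →L[ℝ] ℝ}
    (hf : ∀ y : E, 0 ≤ y → dualAbs f' y ≤ dualAbs f y)
    (hg : ∀ y : E, 0 ≤ y → dualAbs g' y ≤ dualAbs g y)
    (h : DualDisjoint f g) : DualDisjoint f' g' := by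
  intro x hx ε hε
  obtain ⟨y, hy0, hyx, hsum⟩ := h x hx ε hε
  refine ⟨y, hy0, hyx, ?_⟩
  have h1 := hf y hy0
  have h2 := hg (x - y) (sub_nonneg.2 hyx)
  linarith

end AuxAL

end AuxAL

/-- An operator `T : X → E` into a Banach lattice with property (d) is almost
limited iff `‖T* fₙ‖ → 0` for every weak* null sequence of positive pairwise disjoint
functionals. -/
theorem almostLimited_iff_positive_disjoint
    {X E : Type*} [NormedAddCommGroup X] [NormedSpace ℝ X] [CompleteSpace X]
    [NormedAddCommGroup E] [Lattice E] [HasSolidNorm E] [IsOrderedAddMonoid E] [NormedSpace ℝ E] [PosSMulStrictMono ℝ E] [CompleteSpace E]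
    (hE : PropertyD E) (T : X →L[ℝ] E) :
    AlmostLimited T ↔
      ∀ f : ℕ → E →L[ℝ] ℝ, WeakStarNull f → (∀ n, PositiveFunctional (f n)) →
        Pairwise (fun n m => DualDisjoint (f n) (f m)) →
        Tendsto (fun n => ‖(f n).comp T‖) atTop (𝓝 0) := by
  constructor
  · intro hAL f hn _ hp
    exact hAL f hn hp
  · intro hP f hn hp
    -- `|fₙ| → 0` pointwise on the positive cone, by property (d)
    have habs : ∀ x : E, Tendsto (fun n => AuxAL.absCLM (f n) x) atTop (𝓝 0) := by
      intro x
      have hx1 : Tendsto (fun n => dualAbs (f n) x⁺) atTop (𝓝 0) :=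
        hE f hn hp x⁺ (posPart_nonneg x)
      have hx2 : Tendsto (fun n => dualAbs (f n) x⁻) atTop (𝓝 0) :=
        hE f hn hp x⁻ (negPart_nonneg x)
      have h3 := hx1.sub hx2
      rw [sub_zero] at h3
      refine h3.congr fun n => ?_
      rw [AuxAL.absCLM_apply]
      rfl
    have hplusnull : WeakStarNull (fun n => AuxAL.fplus (f n)) := by
      intro x
      have h := (habs x).add (hn x)
      rw [add_zero] at h
      have h2 := h.div_const 2
      rw [zero_div] at h2
      refine h2.congr fun n => ?_
      rw [AuxAL.fplus_apply]
    have hminusnull : WeakStarNull (fun n => AuxAL.fminus (f n)) := by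
      intro x
      have h := (habs x).sub (hn x)
      rw [sub_zero] at h
      have h2 := h.div_const 2
      rw [zero_div] at h2
      refine h2.congr fun n => ?_
      rw [AuxAL.fminus_apply]
    have hplusdisj : Pairwise (fun n m => DualDisjoint (AuxAL.fplus (f n)) (AuxAL.fplus (f m))) :=
      fun n m hnm => AuxAL.disjoint_transfer
        (fun y hy => AuxAL.dualAbs_fplus_le _ hy)
        (fun y hy => AuxAL.dualAbs_fplus_le _ hy) (hp hnm)
    have hminusdisj : Pairwise (fun n m => DualDisjoint (AuxAL.fminus (f n)) (AuxAL.fminus (f m))) :=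
      fun n m hnm => AuxAL.disjoint_transfer
        (fun y hy => AuxAL.dualAbs_fminus_le _ hy)
        (fun y hy => AuxAL.dualAbs_fminus_le _ hy) (hp hnm)
    have h1 := hP (fun n => AuxAL.fplus (f n)) hplusnull
      (fun n => AuxAL.fplus_pos (f n)) hplusdisj
    have h2 := hP (fun n => AuxAL.fminus (f n)) hminusnull
      (fun n => AuxAL.fminus_pos (f n)) hminusdisj
    have hbound : ∀ n, ‖(f n).comp T‖ ≤
        ‖(AuxAL.fplus (f n)).comp T‖ + ‖(AuxAL.fminus (f n)).comp T‖ := by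
      intro n
      have hdecomp : (f n).comp T =
          (AuxAL.fplus (f n)).comp T - (AuxAL.fminus (f n)).comp T := by
        rw [← ContinuousLinearMap.sub_comp, AuxAL.fplus_sub_fminus]
      rw [hdecomp]
      exact norm_sub_le _ _
    have hsum := h1.add h2
    rw [add_zero] at hsum
    exact squeeze_zero (fun n => norm_nonneg _) hbound hsum
end
end

section
/- A Banach lattice E with property (d) has the dual positive Schur property if and only if the identity operator on E is almost limited. -/
open Filter Topology Metric Set NormedSpace BoundedContinuousFunction

noncomputable section

section AuxMachinery

set_option linter.unusedSectionVars false

namespace DPSAux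

variable {E : Type*} [NormedAddCommGroup E] [Lattice E] [HasSolidNorm E] [IsOrderedAddMonoid E] [NormedSpace ℝ E] [PosSMulStrictMono ℝ E]

lemma norm_le_of_abs_le {a b : E} (h : |a| ≤ b) : ‖a‖ ≤ ‖b‖ := by
  have hb : |b| = b := abs_of_nonneg ((abs_nonneg a).trans h)
  exact HasSolidNorm.solid (by rw [hb]; exact h)

lemma norm_le_of_le_of_nonneg {a b : E} (h0 : 0 ≤ a) (h : a ≤ b) : ‖a‖ ≤ ‖b‖ :=
  norm_le_of_abs_le (by rwa [abs_of_nonneg h0])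

lemma posPart_le_abs' (a : E) : a⁺ ≤ |a| := by
  rw [← posPart_add_negPart a]; exact le_add_of_nonneg_right (negPart_nonneg a)

lemma negPart_le_abs' (a : E) : a⁻ ≤ |a| := by
  rw [← posPart_add_negPart a]; exact le_add_of_nonneg_left (posPart_nonneg a)

lemma norm_posPart_le (x : E) : ‖x⁺‖ ≤ ‖x‖ := by
  have h := norm_le_of_abs_le (b := |x|)
    (by rw [abs_of_nonneg (posPart_nonneg x)]; exact posPart_le_abs' x)
  simpa [norm_abs_eq_norm] using h

lemma norm_negPart_le (x : E) : ‖x⁻‖ ≤ ‖x‖ := by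
  have h := norm_le_of_abs_le (b := |x|)
    (by rw [abs_of_nonneg (negPart_nonneg x)]; exact negPart_le_abs' x)
  simpa [norm_abs_eq_norm] using h

/-- positive scalars distribute over `⊓`. -/
lemma smul_inf_of_pos {c : ℝ} (hc : 0 < c) (a b : E) : c • (a ⊓ b) = c • a ⊓ c • b := by
  refine le_antisymm (le_inf ?_ ?_) ?_
  · exact smul_le_smul_of_nonneg_left inf_le_left hc.le
  · exact smul_le_smul_of_nonneg_left inf_le_right hc.le
  · have h1 : c⁻¹ • (c • a ⊓ c • b) ≤ a ⊓ b := by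
      refine le_inf ?_ ?_
      · have := smul_le_smul_of_nonneg_left (inf_le_left (a := c • a) (b := c • b))
          (inv_nonneg.2 hc.le)
        rwa [inv_smul_smul₀ hc.ne'] at this
      · have := smul_le_smul_of_nonneg_left (inf_le_right (a := c • a) (b := c • b))
          (inv_nonneg.2 hc.le)
        rwa [inv_smul_smul₀ hc.ne'] at this
    have := smul_le_smul_of_nonneg_left h1 hc.le
    rwa [smul_inv_smul₀ hc.ne'] at this

lemma smul_sup_of_pos {c : ℝ} (hc : 0 < c) (a b : E) : c • (a ⊔ b) = c • a ⊔ c • b := by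
  refine le_antisymm ?_ (sup_le ?_ ?_)
  · have h1 : a ⊔ b ≤ c⁻¹ • (c • a ⊔ c • b) := by
      refine sup_le ?_ ?_
      · have := smul_le_smul_of_nonneg_left (le_sup_left (a := c • a) (b := c • b))
          (inv_nonneg.2 hc.le)
        rwa [inv_smul_smul₀ hc.ne'] at this
      · have := smul_le_smul_of_nonneg_left (le_sup_right (a := c • a) (b := c • b))
          (inv_nonneg.2 hc.le)
        rwa [inv_smul_smul₀ hc.ne'] at this
    have := smul_le_smul_of_nonneg_left h1 hc.le
    rwa [smul_inv_smul₀ hc.ne'] at this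
  · exact smul_le_smul_of_nonneg_left le_sup_left hc.le
  · exact smul_le_smul_of_nonneg_left le_sup_right hc.le

lemma smul_posPart_of_nonneg {c : ℝ} (hc : 0 ≤ c) (a : E) : (c • a)⁺ = c • a⁺ := by
  rcases eq_or_lt_of_le hc with h | h
  · simp [← h]
  · rw [posPart_def, posPart_def, smul_sup_of_pos h, smul_zero]

lemma le_smul_self_of_one_le {c : ℝ} (hc : 1 ≤ c) {a : E} (ha : 0 ≤ a) : a ≤ c • a := by
  have : (0:E) ≤ (c - 1) • a := smul_nonneg (by linarith) ha
  calc a = (1:ℝ) • a := (one_smul ℝ a).symm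
  _ ≤ (1:ℝ) • a + (c-1) • a := le_add_of_nonneg_right this
  _ = c • a := by rw [← add_smul]; ring_nf

/-- a monotone-positivity helper for functionals. -/
lemma posFunctional_mono {F : E →L[ℝ] ℝ} (hF : ∀ z : E, 0 ≤ z → 0 ≤ F z)
    {a b : E} (hab : a ≤ b) : F a ≤ F b := by
  have := hF (b - a) (sub_nonneg.2 hab)
  have h2 : F (b - a) = F b - F a := by rw [map_sub]
  linarith [h2 ▸ this]

end DPSAux
end AuxMachinery
section ConeMachinery
set_option linter.unusedSectionVars false
namespace DPSAux

variable {E : Type*} [NormedAddCommGroup E] [Lattice E] [HasSolidNorm E] [IsOrderedAddMonoid E] [NormedSpace ℝ E] [PosSMulStrictMono ℝ E]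

/-! ### Extension of additive functionals on the positive cone -/

variable (p : E → ℝ)

/-- extension of a cone-additive function to the whole space. -/
def extendFun (x : E) : ℝ := p x⁺ - p x⁻

variable {p}

lemma extendFun_apply_of_nonneg (hadd : ∀ a b : E, 0 ≤ a → 0 ≤ b → p (a + b) = p a + p b)
    {x : E} (hx : 0 ≤ x) : extendFun p x = p x := by
  have h0 : p 0 = 0 := by have := hadd 0 0 le_rfl le_rfl; simpa using this.symm
  unfold extendFun
  rw [posPart_eq_self.2 hx, negPart_eq_zero.2 hx, h0, sub_zero]

lemma extendFun_add (hadd : ∀ a b : E, 0 ≤ a → 0 ≤ b → p (a + b) = p a + p b) (a b : E) :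
    extendFun p (a + b) = extendFun p a + extendFun p b := by
  have hid : (a+b)⁺ + a⁻ + b⁻ = (a+b)⁻ + a⁺ + b⁺ := by
    have h1 : (a+b)⁺ - (a+b)⁻ = (a⁺ - a⁻) + (b⁺ - b⁻) := by
      rw [posPart_sub_negPart, posPart_sub_negPart, posPart_sub_negPart]
    rw [sub_eq_iff_eq_add] at h1
    rw [h1]; abel
  have key := congrArg p hid
  rw [hadd _ _ (add_nonneg (posPart_nonneg _) (negPart_nonneg _)) (negPart_nonneg _),
    hadd _ _ (posPart_nonneg _) (negPart_nonneg _),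
    hadd _ _ (add_nonneg (negPart_nonneg _) (posPart_nonneg _)) (posPart_nonneg _),
    hadd _ _ (negPart_nonneg _) (posPart_nonneg _)] at key
  unfold extendFun
  linarith [key]

/-- Extend a cone-additive, cone-bounded function to a continuous linear functional. -/
def extendCone (p : E → ℝ) (hadd : ∀ a b : E, 0 ≤ a → 0 ≤ b → p (a + b) = p a + p b)
    (C : ℝ) (hC : 0 ≤ C) (hbd : ∀ x : E, 0 ≤ x → |p x| ≤ C * ‖x‖) : E →L[ℝ] ℝ :=
  AddMonoidHom.toRealLinearMap (AddMonoidHom.mk' (extendFun p) (extendFun_add hadd))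
    (by
      have hb : ∀ x : E, |extendFun p x| ≤ 2 * C * ‖x‖ := by
        intro x
        have h1 := hbd x⁺ (posPart_nonneg x)
        have h2 := hbd x⁻ (negPart_nonneg x)
        have h3 : C * ‖x⁺‖ ≤ C * ‖x‖ :=
          mul_le_mul_of_nonneg_left (norm_posPart_le x) hC
        have h4 : C * ‖x⁻‖ ≤ C * ‖x‖ :=
          mul_le_mul_of_nonneg_left (norm_negPart_le x) hC
        have := abs_sub (p x⁺) (p x⁻)
        unfold extendFun
        calc |p x⁺ - p x⁻| ≤ |p x⁺| + |p x⁻| := abs_sub _ _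
        _ ≤ 2 * C * ‖x‖ := by linarith
      have hlip : LipschitzWith (Real.toNNReal (2 * C)) (extendFun p) := by
        refine LipschitzWith.of_dist_le_mul fun x y => ?_
        have hsub : extendFun p x - extendFun p y = extendFun p (x - y) := by
          have := extendFun_add hadd (x - y) y
          simp only [sub_add_cancel] at this
          linarith
        rw [Real.dist_eq, dist_eq_norm, hsub]
        calc |extendFun p (x - y)| ≤ 2 * C * ‖x - y‖ := hb _
        _ ≤ (Real.toNNReal (2*C) : ℝ) * ‖x - y‖ :=
            mul_le_mul_of_nonneg_right (Real.le_coe_toNNReal _) (norm_nonneg _)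
      exact hlip.continuous)

lemma extendCone_apply (hadd : ∀ a b : E, 0 ≤ a → 0 ≤ b → p (a + b) = p a + p b)
    (C : ℝ) (hC : 0 ≤ C) (hbd : ∀ x : E, 0 ≤ x → |p x| ≤ C * ‖x‖) (x : E) :
    extendCone p hadd C hC hbd x = p x⁺ - p x⁻ := rfl

lemma extendCone_apply_of_nonneg (hadd : ∀ a b : E, 0 ≤ a → 0 ≤ b → p (a + b) = p a + p b)
    (C : ℝ) (hC : 0 ≤ C) (hbd : ∀ x : E, 0 ≤ x → |p x| ≤ C * ‖x‖) {x : E} (hx : 0 ≤ x) :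
    extendCone p hadd C hC hbd x = p x := extendFun_apply_of_nonneg hadd hx

end DPSAux
end ConeMachinery
section ConeSupMachinery
set_option linter.unusedSectionVars false
namespace DPSAux

variable {E : Type*} [NormedAddCommGroup E] [Lattice E] [HasSolidNorm E] [IsOrderedAddMonoid E] [NormedSpace ℝ E] [PosSMulStrictMono ℝ E]

/-- sup of `s` over the order interval `[0,x]`. -/
def coneSup (s : E →L[ℝ] ℝ) (x : E) : ℝ :=
  sSup ((fun z => s z) '' {z | 0 ≤ z ∧ z ≤ x})

lemma coneSup_bddAbove (s : E →L[ℝ] ℝ) (x : E) :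
    BddAbove ((fun z => s z) '' {z | 0 ≤ z ∧ z ≤ x}) := by
  refine ⟨‖s‖ * ‖x‖, ?_⟩
  rintro r ⟨z, ⟨hz0, hzx⟩, rfl⟩
  calc s z ≤ |s z| := le_abs_self _
  _ ≤ ‖s‖ * ‖z‖ := s.le_opNorm z
  _ ≤ ‖s‖ * ‖x‖ := by
      have := norm_le_of_le_of_nonneg hz0 hzx
      exact mul_le_mul_of_nonneg_left this (norm_nonneg s)

lemma le_coneSup (s : E →L[ℝ] ℝ) {x z : E} (hz0 : 0 ≤ z) (hzx : z ≤ x) :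
    s z ≤ coneSup s x :=
  le_csSup (coneSup_bddAbove s x) ⟨z, ⟨hz0, hzx⟩, rfl⟩

lemma coneSup_nonneg (s : E →L[ℝ] ℝ) {x : E} (hx : 0 ≤ x) : 0 ≤ coneSup s x := by
  simpa using le_coneSup s le_rfl hx

lemma coneSup_le (s : E →L[ℝ] ℝ) {x : E} {c : ℝ} (hx : 0 ≤ x)
    (h : ∀ z : E, 0 ≤ z → z ≤ x → s z ≤ c) : coneSup s x ≤ c := by
  refine csSup_le ⟨s 0, ⟨0, ⟨le_rfl, hx⟩, rfl⟩⟩ ?_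
  rintro r ⟨z, ⟨hz0, hzx⟩, rfl⟩
  exact h z hz0 hzx

lemma coneSup_le_norm (s : E →L[ℝ] ℝ) {x : E} (hx : 0 ≤ x) :
    coneSup s x ≤ ‖s‖ * ‖x‖ := by
  refine coneSup_le s hx fun z hz0 hzx => ?_
  calc s z ≤ |s z| := le_abs_self _
  _ ≤ ‖s‖ * ‖z‖ := s.le_opNorm z
  _ ≤ ‖s‖ * ‖x‖ :=
      mul_le_mul_of_nonneg_left (norm_le_of_le_of_nonneg hz0 hzx) (norm_nonneg s)

lemma coneSup_add (s : E →L[ℝ] ℝ) {x y : E} (hx : 0 ≤ x) (hy : 0 ≤ y) :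
    coneSup s (x + y) = coneSup s x + coneSup s y := by
  refine le_antisymm ?_ ?_
  · refine coneSup_le s (by positivity) fun z hz0 hzx => ?_
    have h1 : (0:E) ≤ z ⊓ x := le_inf hz0 hx
    have h2 : z ⊓ x ≤ x := inf_le_right
    have h3 : (0:E) ≤ z - z ⊓ x := sub_nonneg.2 inf_le_left
    have h4 : z - z ⊓ x ≤ y := by
      rw [sub_le_iff_le_add]
      have : z ≤ (y + z) ⊓ (y + x) := le_inf (le_add_of_nonneg_left hy) (by rwa [add_comm y x])
      simpa [add_inf] using this
    have : s z = s (z ⊓ x) + s (z - z ⊓ x) := by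
      rw [← map_add]; congr 1; abel
    rw [this]
    exact add_le_add (le_coneSup s h1 h2) (le_coneSup s h3 h4)
  · rw [← sub_nonneg]
    rw [show coneSup s (x+y) - (coneSup s x + coneSup s y)
        = (coneSup s (x+y) - coneSup s y) - coneSup s x by ring, sub_nonneg]
    refine coneSup_le s hx fun z1 hz10 hz1x => ?_
    rw [le_sub_iff_add_le, ← le_sub_iff_add_le']
    refine coneSup_le s hy fun z2 hz20 hz2y => ?_
    rw [le_sub_iff_add_le, ← map_add]
    exact le_coneSup s (by positivity)
      (by rw [add_comm z2 z1]; exact add_le_add hz1x hz2y)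

/-! ### dualAbs lemmas -/

lemma dualAbs_bddAbove (f : E →L[ℝ] ℝ) (x : E) :
    BddAbove {r : ℝ | ∃ z : E, |z| ≤ x ∧ r = |f z|} := by
  refine ⟨‖f‖ * ‖x‖, ?_⟩
  rintro r ⟨z, hzx, rfl⟩
  calc |f z| ≤ ‖f‖ * ‖z‖ := f.le_opNorm z
  _ ≤ ‖f‖ * ‖x‖ := mul_le_mul_of_nonneg_left (norm_le_of_abs_le hzx) (norm_nonneg f)

lemma le_dualAbs (f : E →L[ℝ] ℝ) {x z : E} (h : |z| ≤ x) : |f z| ≤ dualAbs f x :=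
  le_csSup (dualAbs_bddAbove f x) ⟨z, h, rfl⟩

lemma dualAbs_nonneg (f : E →L[ℝ] ℝ) {x : E} (hx : 0 ≤ x) : 0 ≤ dualAbs f x := by
  have := le_dualAbs f (z := 0) (by simpa using hx)
  simpa using this

lemma abs_apply_le_dualAbs (f : E →L[ℝ] ℝ) (x : E) : |f x| ≤ dualAbs f |x| :=
  le_dualAbs f le_rfl

lemma dualAbs_eq_coneSup (f : E →L[ℝ] ℝ) {x : E} (hx : 0 ≤ x) :
    dualAbs f x = coneSup f x + coneSup (-f) x := by
  refine le_antisymm ?_ ?_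
  · refine csSup_le ⟨0, 0, by simpa using hx, by simp⟩ ?_
    rintro r ⟨z, hzx, rfl⟩
    have hzp : z⁺ ≤ x := (posPart_le_abs' z).trans hzx
    have hzn : z⁻ ≤ x := (negPart_le_abs' z).trans hzx
    have h1 : f z ≤ coneSup f x + coneSup (-f) x := by
      have : f z = f z⁺ + (-f) z⁻ := by
        simp only [ContinuousLinearMap.neg_apply]
        rw [← sub_eq_add_neg, ← map_sub, posPart_sub_negPart]
      rw [this]
      exact add_le_add (le_coneSup f (posPart_nonneg z) hzp)
        (le_coneSup (-f) (negPart_nonneg z) hzn)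
    have h2 : -(f z) ≤ coneSup f x + coneSup (-f) x := by
      have heq : -(f z) = f z⁻ + (-f) z⁺ := by
        simp only [ContinuousLinearMap.neg_apply]
        have : z⁻ - z⁺ = -z := by
          rw [← neg_sub, posPart_sub_negPart]
        rw [← sub_eq_add_neg, ← map_sub, this, map_neg]
      rw [heq]
      exact add_le_add (le_coneSup f (negPart_nonneg z) hzn)
        (le_coneSup (-f) (posPart_nonneg z) hzp)
    exact abs_le.2 ⟨neg_le.1 h2, h1⟩
  · rw [← sub_nonneg, show dualAbs f x - (coneSup f x + coneSup (-f) x)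
      = (dualAbs f x - coneSup (-f) x) - coneSup f x by ring, sub_nonneg]
    refine coneSup_le f hx fun z1 hz10 hz1x => ?_
    rw [le_sub_iff_add_le, ← le_sub_iff_add_le']
    refine coneSup_le (-f) hx fun z2 hz20 hz2x => ?_
    rw [le_sub_iff_add_le]
    have habs : |z1 - z2| ≤ x := by
      rw [abs_le']
      refine ⟨(sub_le_self _ hz20).trans hz1x, ?_⟩
      rw [neg_sub]
      exact (sub_le_self _ hz10).trans hz2x
    calc (-f) z2 + f z1 = f (z1 - z2) := by
          simp only [ContinuousLinearMap.neg_apply]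
          rw [add_comm, ← sub_eq_add_neg, ← map_sub]
    _ ≤ |f (z1 - z2)| := le_abs_self _
    _ ≤ dualAbs f x := le_dualAbs f habs

lemma dualAbs_eq_self_of_positive {h : E →L[ℝ] ℝ} (hpos : ∀ z : E, 0 ≤ z → 0 ≤ h z)
    {w : E} (hw : 0 ≤ w) : dualAbs h w = h w := by
  refine le_antisymm ?_ ?_
  · refine csSup_le ⟨0, 0, by simpa using hw, by simp⟩ ?_
    rintro r ⟨z, hzw, rfl⟩
    have h1 : h z ≤ h |z| := posFunctional_mono hpos (le_abs_self z)
    have h2 : -(h z) ≤ h |z| := by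
      rw [← map_neg]
      exact posFunctional_mono hpos (neg_le_abs z)
    have h3 : h |z| ≤ h w := posFunctional_mono hpos hzw
    exact abs_le.2 ⟨by linarith, by linarith⟩
  · calc h w = |h w| := (abs_of_nonneg (hpos w hw)).symm
    _ ≤ dualAbs h w := le_dualAbs h (by rw [abs_of_nonneg hw])

/-! ### the modulus functional -/

/-- the positive part functional `s⁺ = s ⊔ 0`. -/
def posL (s : E →L[ℝ] ℝ) : E →L[ℝ] ℝ :=
  extendCone (coneSup s) (fun a b ha hb => coneSup_add s ha hb) ‖s‖ (norm_nonneg s)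
    (fun x hx => by
      rw [abs_of_nonneg (coneSup_nonneg s hx)]
      exact coneSup_le_norm s hx)

lemma posL_apply_of_nonneg (s : E →L[ℝ] ℝ) {x : E} (hx : 0 ≤ x) :
    posL s x = coneSup s x :=
  extendCone_apply_of_nonneg _ _ _ _ hx

/-- the modulus functional `|s| = s⁺ + (-s)⁺`. -/
def absL (s : E →L[ℝ] ℝ) : E →L[ℝ] ℝ := posL s + posL (-s)

lemma absL_apply_of_nonneg (s : E →L[ℝ] ℝ) {x : E} (hx : 0 ≤ x) :
    absL s x = dualAbs s x := by
  rw [dualAbs_eq_coneSup s hx]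
  simp [absL, posL_apply_of_nonneg _ hx]

lemma absL_positive (s : E →L[ℝ] ℝ) : PositiveFunctional (absL s) := by
  intro x hx
  rw [absL_apply_of_nonneg s hx]
  exact dualAbs_nonneg s hx

lemma norm_le_norm_absL (s : E →L[ℝ] ℝ) : ‖s‖ ≤ ‖absL s‖ := by
  refine s.opNorm_le_bound (norm_nonneg _) fun x => ?_
  have hlast : absL s |x| ≤ ‖absL s‖ * ‖x‖ := by
    have h1 : absL s |x| ≤ ‖absL s (|x|)‖ := le_abs_self _
    have h2 : ‖absL s (|x|)‖ ≤ ‖absL s‖ * ‖(|x| : E)‖ := (absL s).le_opNorm _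
    rw [norm_abs_eq_norm] at h2
    exact h1.trans h2
  calc ‖s x‖ = |s x| := Real.norm_eq_abs _
  _ ≤ dualAbs s |x| := abs_apply_le_dualAbs s x
  _ = absL s |x| := (absL_apply_of_nonneg s (abs_nonneg x)).symm
  _ ≤ ‖absL s‖ * ‖x‖ := hlast

end DPSAux
end ConeSupMachinery
section ForwardDirection
set_option linter.unusedSectionVars false
namespace DPSAux

variable {E : Type*} [NormedAddCommGroup E] [Lattice E] [HasSolidNorm E] [IsOrderedAddMonoid E] [NormedSpace ℝ E] [PosSMulStrictMono ℝ E]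

lemma weakStarNull_of_cone {h : ℕ → E →L[ℝ] ℝ}
    (key : ∀ z : E, 0 ≤ z → Tendsto (fun n => h n z) atTop (𝓝 0)) : WeakStarNull h := by
  intro x
  have hx : ∀ n, h n x = h n x⁺ - h n x⁻ := by
    intro n
    conv_lhs => rw [← posPart_sub_negPart x]
    rw [map_sub]
  have hlim := (key x⁺ (posPart_nonneg x)).sub (key x⁻ (negPart_nonneg x))
  rw [sub_zero] at hlim
  exact hlim.congr fun n => (hx n).symm

lemma forward_dir (hE : PropertyD E) (hS : DualPositiveSchur E) :
    AlmostLimited (ContinuousLinearMap.id ℝ E) := by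
  intro f hw hd
  have hDA := hE f hw hd
  set h : ℕ → E →L[ℝ] ℝ := fun n => absL (f n) with hh
  have hwh : WeakStarNull h := by
    refine weakStarNull_of_cone fun z hz => ?_
    refine (hDA z hz).congr fun n => ?_
    exact (absL_apply_of_nonneg (f n) hz).symm
  have hposh : ∀ n, PositiveFunctional (h n) := fun n => absL_positive (f n)
  have hn := hS h hwh hposh
  refine squeeze_zero (fun n => norm_nonneg _) (fun n => ?_) hn
  rw [ContinuousLinearMap.comp_id]
  exact norm_le_norm_absL (f n)

end DPSAux
end ForwardDirection
section TruncMachinery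
set_option linter.unusedSectionVars false
namespace DPSAux

variable {E : Type*} [NormedAddCommGroup E] [Lattice E] [HasSolidNorm E] [IsOrderedAddMonoid E] [NormedSpace ℝ E] [PosSMulStrictMono ℝ E]

/-- truncation of a positive functional at (multiples of) a positive vector `y`:
`truncFun F y x = sup_m F (x ⊓ m•y)`; this is the component of `F` in the band
generated by `y`. -/
def truncFun (F : E →L[ℝ] ℝ) (y : E) (x : E) : ℝ := ⨆ m : ℕ, F (x ⊓ m • y)

variable {F : E →L[ℝ] ℝ} {y : E}

lemma inf_nsmul_nonneg (hy : 0 ≤ y) {x : E} (hx : 0 ≤ x) (m : ℕ) : 0 ≤ x ⊓ m • y :=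
  le_inf hx (nsmul_nonneg hy m)

lemma truncFun_bddAbove (hF : ∀ z : E, 0 ≤ z → 0 ≤ F z) (hy : 0 ≤ y) {x : E} (hx : 0 ≤ x) :
    BddAbove (Set.range fun m : ℕ => F (x ⊓ m • y)) := by
  refine ⟨F x, ?_⟩
  rintro r ⟨m, rfl⟩
  exact posFunctional_mono hF inf_le_left

lemma le_truncFun (hF : ∀ z : E, 0 ≤ z → 0 ≤ F z) (hy : 0 ≤ y) {x : E} (hx : 0 ≤ x) (m : ℕ) :
    F (x ⊓ m • y) ≤ truncFun F y x :=
  le_ciSup (truncFun_bddAbove hF hy hx) m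

lemma truncFun_le (hF : ∀ z : E, 0 ≤ z → 0 ≤ F z) (hy : 0 ≤ y) {x : E} (hx : 0 ≤ x) :
    truncFun F y x ≤ F x :=
  ciSup_le fun _ => posFunctional_mono hF inf_le_left

lemma truncFun_nonneg (hF : ∀ z : E, 0 ≤ z → 0 ≤ F z) (hy : 0 ≤ y) {x : E} (hx : 0 ≤ x) :
    0 ≤ truncFun F y x := by
  have h0 : x ⊓ (0:ℕ) • y = 0 := by
    rw [zero_smul]
    exact inf_eq_right.2 hx
  have := le_truncFun hF hy hx 0
  rwa [h0, map_zero] at this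

lemma truncFun_eq_of_le_nsmul (hF : ∀ z : E, 0 ≤ z → 0 ≤ F z) (hy : 0 ≤ y) {w : E}
    (hw : 0 ≤ w) {m₀ : ℕ} (hwm : w ≤ m₀ • y) : truncFun F y w = F w := by
  refine le_antisymm (ciSup_le fun _ => posFunctional_mono hF inf_le_left) ?_
  have : w ⊓ m₀ • y = w := inf_eq_left.2 hwm
  have h := le_truncFun hF hy hw m₀
  rwa [this] at h

lemma truncFun_vanish (hF : ∀ z : E, 0 ≤ z → 0 ≤ F z) {y' : E} (hy : 0 ≤ y) (hy' : 0 ≤ y')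
    (hd : y ⊓ y' = 0) {w : E} (hw : 0 ≤ w) {m : ℕ} (hwm : w ≤ m • y) :
    truncFun F y' w = 0 := by
  have hzero : ∀ c : ℕ, w ⊓ c • y' = 0 := by
    intro c
    refine le_antisymm ?_ (le_inf hw (nsmul_nonneg hy' c))
    have h1 : w ⊓ c • y' ≤ (m + c) • y ⊓ (m + c) • y' := by
      refine le_inf ?_ ?_
      · refine inf_le_left.trans (hwm.trans ?_)
        rw [add_nsmul]
        exact le_add_of_nonneg_right (nsmul_nonneg hy c)
      · refine inf_le_right.trans ?_
        rw [add_nsmul]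
        exact le_add_of_nonneg_left (nsmul_nonneg hy' m)
    rcases Nat.eq_zero_or_pos (m + c) with h | h
    · rw [h, zero_smul, zero_smul] at h1
      simpa using h1
    · have h2 : (m + c) • y ⊓ (m + c) • y' = ((m + c : ℕ) : ℝ) • (y ⊓ y') := by
        rw [smul_inf_of_pos (by exact_mod_cast h) y y',
          Nat.cast_smul_eq_nsmul, Nat.cast_smul_eq_nsmul]
      rw [h2, hd, smul_zero] at h1
      exact h1
  unfold truncFun
  have : (fun c : ℕ => F (w ⊓ c • y')) = fun _ => (0:ℝ) := by
    funext c; rw [hzero c, map_zero]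
  rw [this, ciSup_const]

lemma add_inf_le {a b c : E} (ha : 0 ≤ a) (hb : 0 ≤ b) (hc : 0 ≤ c) :
    (a + b) ⊓ c ≤ a ⊓ c + b ⊓ c := by
  have h1 : a ⊓ c + b ⊓ c = ((a ⊓ c) + b) ⊓ ((a ⊓ c) + c) := by rw [add_inf]
  have h2 : ((a ⊓ c) + b) = (a + b) ⊓ (c + b) := by rw [inf_add]
  have h3 : ((a ⊓ c) + c) = (a + c) ⊓ (c + c) := by rw [inf_add]
  rw [h1, h2, h3]
  refine le_inf (le_inf ?_ ?_) (le_inf ?_ ?_)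
  · exact inf_le_left
  · exact inf_le_right.trans (le_add_of_nonneg_right hb)
  · exact inf_le_right.trans (le_add_of_nonneg_left ha)
  · exact inf_le_right.trans (le_add_of_nonneg_left hc)

lemma truncFun_add (hF : ∀ z : E, 0 ≤ z → 0 ≤ F z) (hy : 0 ≤ y) {x x' : E}
    (hx : 0 ≤ x) (hx' : 0 ≤ x') :
    truncFun F y (x + x') = truncFun F y x + truncFun F y x' := by
  refine le_antisymm ?_ ?_
  · refine ciSup_le fun m => ?_
    have h1 : (x + x') ⊓ m • y ≤ x ⊓ m • y + x' ⊓ m • y :=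
      add_inf_le hx hx' (nsmul_nonneg hy m)
    calc F ((x + x') ⊓ m • y) ≤ F (x ⊓ m • y + x' ⊓ m • y) := posFunctional_mono hF h1
    _ = F (x ⊓ m • y) + F (x' ⊓ m • y) := map_add _ _ _
    _ ≤ truncFun F y x + truncFun F y x' :=
        add_le_add (le_truncFun hF hy hx m) (le_truncFun hF hy hx' m)
  · rw [← sub_nonneg, show truncFun F y (x+x') - (truncFun F y x + truncFun F y x')
      = (truncFun F y (x+x') - truncFun F y x') - truncFun F y x by ring, sub_nonneg]
    refine ciSup_le fun m => ?_
    rw [le_sub_iff_add_le, ← le_sub_iff_add_le']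
    refine ciSup_le fun m' => ?_
    rw [le_sub_iff_add_le, ← map_add]
    have harg : x' ⊓ m' • y + x ⊓ m • y ≤ (x + x') ⊓ (m' + m) • y := by
      refine le_inf ?_ ?_
      · rw [add_comm x x']
        exact add_le_add inf_le_left inf_le_left
      · rw [add_nsmul]
        exact add_le_add inf_le_right inf_le_right
    calc F (x' ⊓ m' • y + x ⊓ m • y) ≤ F ((x + x') ⊓ (m' + m) • y) :=
        posFunctional_mono hF harg
    _ ≤ truncFun F y (x + x') := le_truncFun hF hy (add_nonneg hx hx') _

/-- the truncation functional: the component of `F` on the band generated by `y`. -/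
def truncL (F : E →L[ℝ] ℝ) (y : E) (hF : ∀ z : E, 0 ≤ z → 0 ≤ F z) (hy : 0 ≤ y) :
    E →L[ℝ] ℝ :=
  extendCone (truncFun F y) (fun a b ha hb => truncFun_add hF hy ha hb) ‖F‖ (norm_nonneg F)
    (fun x hx => by
      rw [abs_of_nonneg (truncFun_nonneg hF hy hx)]
      calc truncFun F y x ≤ F x := truncFun_le hF hy hx
      _ ≤ |F x| := le_abs_self _
      _ ≤ ‖F‖ * ‖x‖ := F.le_opNorm x)

lemma truncL_apply_of_nonneg (hF : ∀ z : E, 0 ≤ z → 0 ≤ F z) (hy : 0 ≤ y) {x : E}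
    (hx : 0 ≤ x) : truncL F y hF hy x = truncFun F y x :=
  extendCone_apply_of_nonneg _ _ _ _ hx

lemma truncL_positive (hF : ∀ z : E, 0 ≤ z → 0 ≤ F z) (hy : 0 ≤ y) :
    PositiveFunctional (truncL F y hF hy) := by
  intro x hx
  rw [truncL_apply_of_nonneg hF hy hx]
  exact truncFun_nonneg hF hy hx

lemma truncL_le (hF : ∀ z : E, 0 ≤ z → 0 ≤ F z) (hy : 0 ≤ y) {x : E} (hx : 0 ≤ x) :
    truncL F y hF hy x ≤ F x := by
  rw [truncL_apply_of_nonneg hF hy hx]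
  exact truncFun_le hF hy hx

lemma truncL_apply_self (hF : ∀ z : E, 0 ≤ z → 0 ≤ F z) (hy : 0 ≤ y) :
    truncL F y hF hy y = F y := by
  rw [truncL_apply_of_nonneg hF hy hy]
  exact truncFun_eq_of_le_nsmul hF hy hy (m₀ := 1) (by rw [one_smul])

lemma truncL_dualDisjoint {F F' : E →L[ℝ] ℝ} {y y' : E}
    (hF : ∀ z : E, 0 ≤ z → 0 ≤ F z) (hF' : ∀ z : E, 0 ≤ z → 0 ≤ F' z)
    (hy : 0 ≤ y) (hy' : 0 ≤ y') (hd : y ⊓ y' = 0) :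
    DualDisjoint (truncL F y hF hy) (truncL F' y' hF' hy') := by
  intro x hx ε hε
  -- approximate the sup defining `truncFun F y x`
  obtain ⟨m, hm⟩ : ∃ m : ℕ, truncFun F y x - ε / 2 < F (x ⊓ m • y) := by
    have hne : (Set.range fun m : ℕ => F (x ⊓ m • y)).Nonempty := ⟨_, ⟨0, rfl⟩⟩
    have hlt : truncFun F y x - ε / 2 < truncFun F y x := by linarith
    obtain ⟨r, ⟨m, rfl⟩, hr⟩ := exists_lt_of_lt_csSup hne hlt
    exact ⟨m, hr⟩
  set w : E := x ⊓ m • y with hw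
  have hw0 : 0 ≤ w := inf_nsmul_nonneg hy hx m
  have hwx : w ≤ x := inf_le_left
  refine ⟨x - w, sub_nonneg.2 hwx, sub_le_self _ hw0, ?_⟩
  have hxw0 : 0 ≤ x - w := sub_nonneg.2 hwx
  have hA : dualAbs (truncL F y hF hy) (x - w) = truncFun F y x - F w := by
    rw [dualAbs_eq_self_of_positive (truncL_positive hF hy) hxw0,
      truncL_apply_of_nonneg hF hy hxw0]
    have hadd : truncFun F y x = truncFun F y w + truncFun F y (x - w) := by
      have := truncFun_add hF hy hw0 hxw0
      rw [add_sub_cancel] at this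
      exact this
    have hww : truncFun F y w = F w :=
      truncFun_eq_of_le_nsmul hF hy hw0 (m₀ := m) inf_le_right
    linarith [hadd, hww]
  have hB : dualAbs (truncL F' y' hF' hy') (x - (x - w)) = 0 := by
    rw [sub_sub_cancel]
    rw [dualAbs_eq_self_of_positive (truncL_positive hF' hy') hw0,
      truncL_apply_of_nonneg hF' hy' hw0]
    exact truncFun_vanish hF' hy hy' hd hw0 (m := m) inf_le_right
  rw [hA, hB]
  linarith [hm]

end DPSAux
end TruncMachinery
section StarStar
set_option linter.unusedSectionVars false
namespace DPSAux

variable {E : Type*} [NormedAddCommGroup E] [Lattice E] [HasSolidNorm E] [IsOrderedAddMonoid E] [NormedSpace ℝ E] [PosSMulStrictMono ℝ E]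

lemma exists_subseq_ge_of_not_tendsto {u : ℕ → ℝ} (h0 : ∀ n, 0 ≤ u n)
    (h : ¬ Tendsto u atTop (𝓝 0)) :
    ∃ ε > (0:ℝ), ∃ φ : ℕ → ℕ, StrictMono φ ∧ ∀ n, ε ≤ u (φ n) := by
  rw [Metric.tendsto_atTop] at h
  push_neg at h
  obtain ⟨ε, hε, hfreq⟩ := h
  refine ⟨ε, hε, ?_⟩
  have hfr : ∃ᶠ n in atTop, ε ≤ u n := by
    rw [Filter.frequently_atTop]
    intro N
    obtain ⟨n, hn, hd⟩ := hfreq N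
    refine ⟨n, hn, ?_⟩
    rwa [Real.dist_eq, sub_zero, abs_of_nonneg (h0 n)] at hd
  obtain ⟨φ, hφ, hP⟩ := Filter.extraction_of_frequently_atTop hfr
  exact ⟨φ, hφ, hP⟩

/-- KEY LEMMA: if the identity is almost limited, then a weak* null sequence of positive
functionals tends to zero uniformly along a disjoint sequence of positive vectors of the
unit ball. -/
lemma tendsto_eval_disjoint (hAL : AlmostLimited (ContinuousLinearMap.id ℝ E))
    (F : ℕ → E →L[ℝ] ℝ) (hw : WeakStarNull F) (hpos : ∀ n, PositiveFunctional (F n))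
    (y : ℕ → E) (hy0 : ∀ k, 0 ≤ y k) (hy1 : ∀ k, ‖y k‖ ≤ 1)
    (hdisj : ∀ i j, i ≠ j → y i ⊓ y j = 0) :
    Tendsto (fun k => F k (y k)) atTop (𝓝 0) := by
  by_contra hcon
  obtain ⟨ε, hε, φ, hφ, hge⟩ := exists_subseq_ge_of_not_tendsto
    (fun k => hpos k (y k) (hy0 k)) hcon
  set h : ℕ → E →L[ℝ] ℝ :=
    fun j => truncL (F (φ j)) (y (φ j)) (hpos (φ j)) (hy0 (φ j)) with hh
  have hwh : WeakStarNull h := by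
    refine weakStarNull_of_cone fun z hz => ?_
    have hFz : Tendsto (fun j => F (φ j) z) atTop (𝓝 0) :=
      (hw z).comp hφ.tendsto_atTop
    refine squeeze_zero (fun j => truncL_positive _ _ z hz) (fun j => ?_) hFz
    exact truncL_le _ _ hz
  have hd : Pairwise fun i j => DualDisjoint (h i) (h j) := by
    intro i j hij
    exact truncL_dualDisjoint _ _ _ _ (hdisj (φ i) (φ j) (hφ.injective.ne hij))
  have hlim := hAL h hwh hd
  have hlow : ∀ j, ε ≤ ‖(h j).comp (ContinuousLinearMap.id ℝ E)‖ := by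
    intro j
    rw [ContinuousLinearMap.comp_id]
    have h1 : h j (y (φ j)) = F (φ j) (y (φ j)) := truncL_apply_self _ _
    have h2 : h j (y (φ j)) ≤ ‖h j‖ := by
      calc h j (y (φ j)) ≤ |h j (y (φ j))| := le_abs_self _
      _ ≤ ‖h j‖ * ‖y (φ j)‖ := (h j).le_opNorm _
      _ ≤ ‖h j‖ * 1 := mul_le_mul_of_nonneg_left (hy1 (φ j)) (norm_nonneg _)
      _ = ‖h j‖ := mul_one _
    calc ε ≤ F (φ j) (y (φ j)) := hge j
    _ = h j (y (φ j)) := h1.symm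
    _ ≤ ‖h j‖ := h2
  have hev : ∀ᶠ j in atTop,
      ‖(h j).comp (ContinuousLinearMap.id ℝ E)‖ < ε :=
    hlim.eventually (Filter.Tendsto.eventually_lt_const hε tendsto_id)
  obtain ⟨j, hj⟩ := hev.exists
  exact absurd (hlow j) (not_le.2 hj)

end DPSAux
end StarStar
section BackwardDirection
set_option linter.unusedSectionVars false
set_option maxHeartbeats 1000000
namespace DPSAux

variable {E : Type*} [NormedAddCommGroup E] [Lattice E] [HasSolidNorm E] [IsOrderedAddMonoid E] [NormedSpace ℝ E] [PosSMulStrictMono ℝ E]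

lemma exists_pos_witness {F : E →L[ℝ] ℝ} (hF : PositiveFunctional F) {ε : ℝ} (hε : 0 < ε)
    (hn : ε ≤ ‖F‖) : ∃ x : E, 0 ≤ x ∧ ‖x‖ ≤ 1 ∧ ε / 2 < F x := by
  by_contra hc
  push_neg at hc
  have hb : ∀ x : E, ‖F x‖ ≤ ε / 2 * ‖x‖ := by
    intro x
    have habs : |F x| ≤ F |x| := by
      have h1 : F x ≤ F |x| := posFunctional_mono hF (le_abs_self x)
      have h2 : -(F x) ≤ F |x| := by
        rw [← map_neg]; exact posFunctional_mono hF (neg_le_abs x)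
      exact abs_le.2 ⟨by linarith, h1⟩
    rcases eq_or_ne x 0 with rfl | hx0
    · simp
    have hnx : (0:ℝ) < ‖x‖ := norm_pos_iff.2 hx0
    have hu0 : (0:E) ≤ ‖x‖⁻¹ • |x| := smul_nonneg (by positivity) (abs_nonneg x)
    have hu1 : ‖(‖x‖⁻¹ • |x| : E)‖ ≤ 1 := by
      rw [norm_smul, norm_abs_eq_norm, Real.norm_eq_abs, abs_of_nonneg (by positivity),
        inv_mul_cancel₀ hnx.ne']
    have hval := hc _ hu0 hu1
    rw [map_smul, smul_eq_mul] at hval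
    have hF2 : F |x| ≤ ε / 2 * ‖x‖ := by
      rw [inv_mul_le_iff₀ hnx] at hval
      linarith [hval]
    rw [Real.norm_eq_abs]
    exact habs.trans hF2
  have : ‖F‖ ≤ ε / 2 := F.opNorm_le_bound (by positivity) hb
  linarith

lemma backward_dir [CompleteSpace E] (hAL : AlmostLimited (ContinuousLinearMap.id ℝ E)) :
    DualPositiveSchur E := by
  intro f hw hpos
  by_contra hcon
  obtain ⟨ε, hε, φ, hφ, hge⟩ :=
    exists_subseq_ge_of_not_tendsto (fun n => norm_nonneg (f n)) hcon
  set g : ℕ → E →L[ℝ] ℝ := fun k => f (φ k) with hg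
  have hgw : WeakStarNull g := fun x => (hw x).comp hφ.tendsto_atTop
  have hgpos : ∀ k, PositiveFunctional (g k) := fun k => hpos (φ k)
  -- uniform bound
  obtain ⟨C, hC⟩ : ∃ C, ∀ k, ‖g k‖ ≤ C := by
    have hb : ∀ x, ∃ c, ∀ k, ‖g k x‖ ≤ c := by
      intro x
      have ht : Tendsto (fun k => ‖g k x‖) atTop (𝓝 ‖(0:ℝ)‖) := (hgw x).norm
      obtain ⟨c, hc⟩ := ht.bddAbove_range
      exact ⟨c, fun k => hc ⟨k, rfl⟩⟩
    exact banach_steinhaus hb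
  have hC0 : 0 ≤ C := le_trans (norm_nonneg _) (hC 0)
  -- witnesses
  have hWex : ∀ k, ∃ x : E, 0 ≤ x ∧ ‖x‖ ≤ 1 ∧ ε / 2 < g k x := fun k =>
    exists_pos_witness (hgpos k) hε (hge k)
  choose W hW0 hW1 hWv using hWex
  -- extraction with column control
  have hstep : ∀ (N : ℕ) (k : ℕ), ∃ m : ℕ, N < m ∧ ∀ j ≤ N, g m (W j) < (1/16:ℝ)^k := by
    intro N k
    have hpow : (0:ℝ) < (1/16:ℝ)^k := by positivity
    have h1 : ∀ j ∈ Finset.range (N+1), ∀ᶠ m in atTop, g m (W j) < (1/16:ℝ)^k := by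
      intro j _
      exact (hgw (W j)).eventually (Filter.Tendsto.eventually_lt_const hpow tendsto_id)
    have h2 : ∀ᶠ m in atTop, ∀ j ∈ Finset.range (N+1), g m (W j) < (1/16:ℝ)^k :=
      (Filter.eventually_all_finset (Finset.range (N+1))).2 h1
    obtain ⟨m, hm1, hm2⟩ := (h2.and (Filter.eventually_gt_atTop N)).exists
    exact ⟨m, hm2, fun j hj => hm1 j (Finset.mem_range.2 (Nat.lt_succ_of_le hj))⟩
  obtain ⟨a, ha0, haS⟩ : ∃ a : ℕ → ℕ, a 0 = 0 ∧
      ∀ k, a (k+1) = (hstep (a k) (k+1)).choose :=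
    ⟨fun k => Nat.rec 0 (fun k' ih => (hstep ih (k'+1)).choose) k, rfl, fun k => rfl⟩
  have halt : ∀ k, a k < a (k+1) := fun k => by
    rw [haS k]; exact (hstep (a k) (k+1)).choose_spec.1
  have haMono : StrictMono a := strictMono_nat_of_lt_succ halt
  have hcol : ∀ k i, i < k → g (a k) (W (a i)) < (1/16:ℝ)^k := by
    intro k i hik
    cases k with
    | zero => omega
    | succ k' =>
      have hle : a i ≤ a k' := haMono.monotone (Nat.lt_succ_iff.1 hik)
      rw [haS k']
      exact (hstep (a k') (k'+1)).choose_spec.2 (a i) hle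
  set ξ : ℕ → E := fun k => W (a k) with hξ
  set G : ℕ → E →L[ℝ] ℝ := fun k => g (a k) with hG
  have hGw : WeakStarNull G := fun x => (hgw x).comp haMono.tendsto_atTop
  have hGpos : ∀ k, PositiveFunctional (G k) := fun k => hgpos (a k)
  have hGnorm : ∀ k, ‖G k‖ ≤ C := fun k => hC (a k)
  have hGval : ∀ k, ε / 2 < G k (ξ k) := fun k => hWv (a k)
  have hξ0 : ∀ k, 0 ≤ ξ k := fun k => hW0 (a k)
  have hξ1 : ∀ k, ‖ξ k‖ ≤ 1 := fun k => hW1 (a k)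
  -- the dominating element s
  have hsummand : ∀ i : ℕ, ‖(1/2:ℝ)^i • ξ i‖ ≤ (1/2:ℝ)^i := by
    intro i
    rw [norm_smul, Real.norm_eq_abs, abs_of_nonneg (by positivity)]
    calc (1/2:ℝ)^i * ‖ξ i‖ ≤ (1/2:ℝ)^i * 1 :=
      mul_le_mul_of_nonneg_left (hξ1 i) (by positivity)
    _ = (1/2:ℝ)^i := mul_one _
  have hgeo : Summable (fun i : ℕ => (1/2:ℝ)^i) :=
    summable_geometric_of_lt_one (by norm_num) (by norm_num)
  have hsum : Summable (fun i : ℕ => (1/2:ℝ)^i • ξ i) :=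
    Summable.of_norm_bounded hgeo hsummand
  have hnsum : Summable (fun i : ℕ => ‖(1/2:ℝ)^i • ξ i‖) :=
    Summable.of_nonneg_of_le (fun i => norm_nonneg _) hsummand hgeo
  set s : E := ∑' i, (1/2:ℝ)^i • ξ i with hs
  have hs0 : 0 ≤ s := tsum_nonneg fun i => smul_nonneg (by positivity) (hξ0 i)
  have hterm : ∀ k, (1/2:ℝ)^k • ξ k ≤ s := fun k =>
    Summable.le_tsum hsum k fun j _ => smul_nonneg (by positivity) (hξ0 j)
  have hξs : ∀ k, ξ k ≤ (2:ℝ)^k • s := by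
    intro k
    have := smul_le_smul_of_nonneg_left (hterm k)
      (le_of_lt (pow_pos two_pos k) : (0:ℝ) ≤ 2^k)
    rwa [smul_smul, show (2:ℝ)^k * (1/2)^k = 1 by rw [← mul_pow]; norm_num, one_smul] at this
  have hsnorm : ‖s‖ ≤ 2 := by
    calc ‖s‖ ≤ ∑' i, ‖(1/2:ℝ)^i • ξ i‖ := norm_tsum_le_tsum_norm hnsum
    _ ≤ ∑' i, (1/2:ℝ)^i := Summable.tsum_le_tsum hsummand hnsum hgeo
    _ = 2 := by rw [tsum_geometric_of_lt_one (by norm_num) (by norm_num)]; norm_num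
  -- the disjoint sequence on the predual side
  set y : ℕ → E := fun k =>
    (ξ k - (4:ℝ)^k • (∑ i ∈ Finset.range k, ξ i) - (1/2:ℝ)^k • s)⁺ with hy
  have hSum0 : ∀ k, (0:E) ≤ ∑ i ∈ Finset.range k, ξ i := fun k =>
    Finset.sum_nonneg fun i _ => hξ0 i
  have hy0 : ∀ k, 0 ≤ y k := fun k => posPart_nonneg _
  have hyle : ∀ k, y k ≤ ξ k := by
    intro k
    have h1 : (0:E) ≤ (4:ℝ)^k • (∑ i ∈ Finset.range k, ξ i) :=
      smul_nonneg (by positivity) (hSum0 k)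
    have h2 : (0:E) ≤ (1/2:ℝ)^k • s := smul_nonneg (by positivity) hs0
    have harg : ξ k - (4:ℝ)^k • (∑ i ∈ Finset.range k, ξ i) - (1/2:ℝ)^k • s ≤ ξ k :=
      (sub_le_self _ h2).trans (sub_le_self _ h1)
    calc y k ≤ (ξ k)⁺ := posPart_mono harg
    _ = ξ k := posPart_eq_self.2 (hξ0 k)
  have hy1 : ∀ k, ‖y k‖ ≤ 1 := fun k =>
    (norm_le_of_le_of_nonneg (hy0 k) (hyle k)).trans (hξ1 k)
  -- pairwise disjointness of the y's
  have hyd : ∀ j k, j < k → y j ⊓ y k = 0 := by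
    intro j k hjk
    set σ : E := ξ j - (1/2:ℝ)^j • s with hσ
    have h1 : y j ≤ σ⁺ := by
      refine posPart_mono ?_
      have h0 : (0:E) ≤ (4:ℝ)^j • (∑ i ∈ Finset.range j, ξ i) :=
        smul_nonneg (by positivity) (hSum0 j)
      calc ξ j - (4:ℝ)^j • (∑ i ∈ Finset.range j, ξ i) - (1/2:ℝ)^j • s
          = (ξ j - (4:ℝ)^j • (∑ i ∈ Finset.range j, ξ i)) - (1/2:ℝ)^j • s := rfl
      _ ≤ ξ j - (1/2:ℝ)^j • s := sub_le_sub_right (sub_le_self _ h0) _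
    have hjmem : ξ j ≤ ∑ i ∈ Finset.range k, ξ i :=
      Finset.single_le_sum (fun i _ => hξ0 i) (Finset.mem_range.2 hjk)
    have hcoef : (2:ℝ)^(k+j) ≤ (4:ℝ)^k := by
      have h4 : (4:ℝ)^k = (2:ℝ)^(2*k) := by rw [pow_mul]; norm_num
      rw [h4]
      exact pow_le_pow_right₀ (by norm_num) (by omega)
    have h2 : y k ≤ ((2:ℝ)^(k+j)) • σ⁻ := by
      have hs1 : ξ k - (4:ℝ)^k • (∑ i ∈ Finset.range k, ξ i) - (1/2:ℝ)^k • s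
          ≤ ξ k - (4:ℝ)^k • ξ j := by
        have b1 : (4:ℝ)^k • ξ j ≤ (4:ℝ)^k • (∑ i ∈ Finset.range k, ξ i) :=
          smul_le_smul_of_nonneg_left hjmem (by positivity)
        have b2 : (0:E) ≤ (1/2:ℝ)^k • s := smul_nonneg (by positivity) hs0
        calc ξ k - (4:ℝ)^k • (∑ i ∈ Finset.range k, ξ i) - (1/2:ℝ)^k • s
            ≤ ξ k - (4:ℝ)^k • (∑ i ∈ Finset.range k, ξ i) := sub_le_self _ b2
        _ ≤ ξ k - (4:ℝ)^k • ξ j := sub_le_sub_left b1 _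
      have hs2 : ξ k - (4:ℝ)^k • ξ j ≤ (2:ℝ)^(k+j) • (-σ) := by
        have hexp : (2:ℝ)^(k+j) • ((1/2:ℝ)^j • s) = (2:ℝ)^k • s := by
          rw [smul_smul]
          congr 1
          rw [pow_add]
          have : (2:ℝ)^j * (1/2:ℝ)^j = 1 := by rw [← mul_pow]; norm_num
          calc (2:ℝ)^k * (2:ℝ)^j * (1/2:ℝ)^j = (2:ℝ)^k * ((2:ℝ)^j * (1/2:ℝ)^j) := by ring
          _ = (2:ℝ)^k := by rw [this, mul_one]
        have hsm : (2:ℝ)^(k+j) • ξ j ≤ (4:ℝ)^k • ξ j := by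
          have h0 := smul_nonneg (sub_nonneg.2 hcoef) (hξ0 j)
          rw [sub_smul] at h0
          exact sub_nonneg.1 h0
        have hnegσ : -σ = (1/2:ℝ)^j • s - ξ j := by rw [hσ, neg_sub]
        rw [hnegσ, smul_sub, hexp]
        exact sub_le_sub (hξs k) hsm
      have step1 : y k ≤ ((2:ℝ)^(k+j) • (-σ))⁺ := posPart_mono (hs1.trans hs2)
      have step2 : ((2:ℝ)^(k+j) • (-σ))⁺ = (2:ℝ)^(k+j) • σ⁻ := by
        rw [smul_posPart_of_nonneg (show (0:ℝ) ≤ (2:ℝ)^(k+j) by positivity) (-σ)]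
        congr 1
      rw [step2] at step1
      exact step1
    refine le_antisymm ?_ (le_inf (posPart_nonneg _) (posPart_nonneg _))
    calc y j ⊓ y k ≤ σ⁺ ⊓ ((2:ℝ)^(k+j) • σ⁻) := inf_le_inf h1 h2
    _ ≤ ((2:ℝ)^(k+j) • σ⁺) ⊓ ((2:ℝ)^(k+j) • σ⁻) := by
        refine inf_le_inf ?_ le_rfl
        refine le_smul_self_of_one_le ?_ (posPart_nonneg σ)
        exact one_le_pow₀ (by norm_num)
    _ = (2:ℝ)^(k+j) • (σ⁺ ⊓ σ⁻) := (smul_inf_of_pos (by positivity) _ _).symm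
    _ = 0 := by rw [posPart_inf_negPart_eq_zero, smul_zero]
  have hydisj : ∀ i j, i ≠ j → y i ⊓ y j = 0 := by
    intro i j hij
    rcases lt_or_gt_of_ne hij with h | h
    · exact hyd i j h
    · rw [inf_comm]; exact hyd j i h
  -- main convergence from the key lemma
  have hT : Tendsto (fun k => G k (y k)) atTop (𝓝 0) :=
    tendsto_eval_disjoint hAL G hGw hGpos y hy0 hy1 hydisj
  -- the remainder bound
  set B : ℕ → ℝ := fun k => (4:ℝ)^k * (k * (1/16:ℝ)^k) + (1/2:ℝ)^k * (C * 2) with hB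
  have hGb : ∀ k, G k (ξ k) ≤ G k (y k) + B k := by
    intro k
    set wK : E := (4:ℝ)^k • (∑ i ∈ Finset.range k, ξ i) + (1/2:ℝ)^k • s with hwK
    have hyk : y k = (ξ k - wK)⁺ := by
      show (ξ k - (4:ℝ)^k • (∑ i ∈ Finset.range k, ξ i) - (1/2:ℝ)^k • s)⁺ = (ξ k - wK)⁺
      rw [hwK, sub_sub]
    have hxy : ξ k - y k = ξ k ⊓ wK := by
      rw [hyk, ← inf_eq_sub_posPart_sub]
    have h1 : G k (ξ k) = G k (y k) + G k (ξ k ⊓ wK) := by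
      have h := congrArg (G k) hxy
      rw [map_sub] at h
      linarith
    have h2 : G k (ξ k ⊓ wK) ≤ G k wK := posFunctional_mono (hGpos k) inf_le_right
    have h3 : G k wK = (4:ℝ)^k * (∑ i ∈ Finset.range k, G k (ξ i))
        + (1/2:ℝ)^k * G k s := by
      rw [hwK, map_add, map_smul, map_smul, map_sum, smul_eq_mul, smul_eq_mul]
    have h4 : ∑ i ∈ Finset.range k, G k (ξ i) ≤ k * (1/16:ℝ)^k := by
      calc ∑ i ∈ Finset.range k, G k (ξ i)
          ≤ (Finset.range k).card • ((1/16:ℝ)^k) :=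
            Finset.sum_le_card_nsmul _ _ _ (fun i hi => (hcol k i (Finset.mem_range.1 hi)).le)
      _ = k * (1/16:ℝ)^k := by rw [Finset.card_range, nsmul_eq_mul]
    have h5 : G k s ≤ C * 2 := by
      calc G k s ≤ |G k s| := le_abs_self _
      _ ≤ ‖G k‖ * ‖s‖ := (G k).le_opNorm s
      _ ≤ C * 2 := mul_le_mul (hGnorm k) hsnorm (norm_nonneg _) hC0
    have h6 : G k wK ≤ B k := by
      rw [h3, hB]
      have p1 : (0:ℝ) ≤ (4:ℝ)^k := by positivity
      have p2 : (0:ℝ) ≤ (1/2:ℝ)^k := by positivity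
      exact add_le_add (mul_le_mul_of_nonneg_left h4 p1)
        (mul_le_mul_of_nonneg_left h5 p2)
    linarith
  -- B tends to zero
  have hBtend : Tendsto B atTop (𝓝 0) := by
    have hb1 : ∀ k : ℕ, B k ≤ (1/2:ℝ)^k * (1 + C * 2) := by
      intro k
      have e1 : (4:ℝ)^k * (k * (1/16:ℝ)^k) = k * (1/4:ℝ)^k := by
        have : (4:ℝ)^k * (1/16:ℝ)^k = (1/4:ℝ)^k := by
          rw [← mul_pow]; norm_num
        calc (4:ℝ)^k * (k * (1/16:ℝ)^k) = k * ((4:ℝ)^k * (1/16:ℝ)^k) := by ring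
        _ = k * (1/4:ℝ)^k := by rw [this]
      have e2 : (k:ℝ) * (1/4:ℝ)^k ≤ (1/2:ℝ)^k := by
        have hk2 : (k:ℝ) ≤ (2:ℝ)^k := by
          exact_mod_cast (Nat.lt_two_pow_self (n := k)).le
        have e3 : (2:ℝ)^k * (1/4:ℝ)^k = (1/2:ℝ)^k := by
          rw [← mul_pow]; norm_num
        calc (k:ℝ) * (1/4:ℝ)^k ≤ (2:ℝ)^k * (1/4:ℝ)^k :=
          mul_le_mul_of_nonneg_right hk2 (by positivity)
        _ = (1/2:ℝ)^k := e3
      calc B k = (4:ℝ)^k * (k * (1/16:ℝ)^k) + (1/2:ℝ)^k * (C * 2) := rfl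
      _ ≤ (1/2:ℝ)^k + (1/2:ℝ)^k * (C * 2) := by rw [e1]; linarith [e2]
      _ = (1/2:ℝ)^k * (1 + C * 2) := by ring
    have hb0 : ∀ k, 0 ≤ B k := by
      intro k
      have : (0:ℝ) ≤ (4:ℝ)^k * (k * (1/16:ℝ)^k) := by positivity
      have h2 : (0:ℝ) ≤ (1/2:ℝ)^k * (C * 2) := by positivity
      rw [hB]; dsimp only; linarith
    have hgt : Tendsto (fun k : ℕ => (1/2:ℝ)^k * (1 + C * 2)) atTop (𝓝 0) := by
      have := (tendsto_pow_atTop_nhds_zero_of_lt_one (by norm_num : (0:ℝ) ≤ 1/2)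
        (by norm_num)).mul_const (1 + C * 2)
      rwa [zero_mul] at this
    exact squeeze_zero hb0 hb1 hgt
  -- contradiction
  have hfinal : Tendsto (fun k => G k (y k) + B k) atTop (𝓝 0) := by
    have := hT.add hBtend
    rwa [add_zero] at this
  have hev : ∀ᶠ k in atTop, G k (y k) + B k < ε / 2 :=
    hfinal.eventually (Filter.Tendsto.eventually_lt_const (by linarith) tendsto_id)
  obtain ⟨k, hk⟩ := hev.exists
  have hk' : G k (y k) + B k < ε / 2 := hk
  have h1 := hGval k
  have h2 := hGb k
  exact absurd (h2.trans_lt hk') (not_lt.2 h1.le)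

end DPSAux
end BackwardDirection
/-- A Banach lattice with property (d) has the dual positive Schur property iff
its identity operator is almost limited. -/
theorem dualPositiveSchur_iff_id_almostLimited
    {E : Type*} [NormedAddCommGroup E] [Lattice E] [HasSolidNorm E] [IsOrderedAddMonoid E] [NormedSpace ℝ E] [PosSMulStrictMono ℝ E]
    [CompleteSpace E] (hE : PropertyD E) :
    DualPositiveSchur E ↔ AlmostLimited (ContinuousLinearMap.id ℝ E) := by
  constructor
  · exact fun hS => DPSAux.forward_dir hE hS
  · exact fun hAL => DPSAux.backward_dir hAL
end
end

section
/- Let E and F be Banach lattices such that F has property (d), and let S, T : E → F be bounded linear operators with 0 ≤ S ≤ T (i.e. S is positive and T − S is positive). If T is almost limited, then S is almost limited. -/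
open Filter Topology Metric Set NormedSpace BoundedContinuousFunction

noncomputable section

namespace AlmostLimitedAux

variable {E : Type*} [NormedAddCommGroup E] [Lattice E] [HasSolidNorm E] [IsOrderedAddMonoid E] [NormedSpace ℝ E]

lemma dualAbs_bddAbove (f : E →L[ℝ] ℝ) (x : E) :
    BddAbove {r : ℝ | ∃ z : E, |z| ≤ x ∧ r = |f z|} := by
  refine ⟨‖f‖ * ‖x‖, ?_⟩
  rintro r ⟨z, hz, rfl⟩
  have hx0 : 0 ≤ x := le_trans (abs_nonneg z) hz
  have hzx : ‖z‖ ≤ ‖x‖ := HasSolidNorm.solid (by rwa [abs_of_nonneg hx0])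
  calc |f z| = ‖f z‖ := (Real.norm_eq_abs _).symm
    _ ≤ ‖f‖ * ‖z‖ := f.le_opNorm z
    _ ≤ ‖f‖ * ‖x‖ := by gcongr

lemma zero_mem_dualAbs_set (f : E →L[ℝ] ℝ) {x : E} (hx : 0 ≤ x) :
    (0 : ℝ) ∈ {r : ℝ | ∃ z : E, |z| ≤ x ∧ r = |f z|} :=
  ⟨0, by simpa using hx, by simp⟩

lemma dualAbs_nonneg (f : E →L[ℝ] ℝ) {x : E} (hx : 0 ≤ x) : 0 ≤ dualAbs f x :=
  le_csSup (dualAbs_bddAbove f x) (zero_mem_dualAbs_set f hx)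

lemma abs_le_dualAbs (f : E →L[ℝ] ℝ) {x z : E} (hz : |z| ≤ x) : |f z| ≤ dualAbs f x :=
  le_csSup (dualAbs_bddAbove f x) ⟨z, hz, rfl⟩

lemma dualAbs_le (f : E →L[ℝ] ℝ) {x : E} {c : ℝ} (hx : 0 ≤ x)
    (h : ∀ z : E, |z| ≤ x → |f z| ≤ c) : dualAbs f x ≤ c := by
  refine csSup_le ⟨0, zero_mem_dualAbs_set f hx⟩ ?_
  rintro r ⟨z, hz, rfl⟩
  exact h z hz

lemma dualAbs_le_opNorm (f : E →L[ℝ] ℝ) {x : E} (hx : 0 ≤ x) :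
    dualAbs f x ≤ ‖f‖ * ‖x‖ := by
  refine dualAbs_le f hx fun z hz => ?_
  have hzx : ‖z‖ ≤ ‖x‖ := HasSolidNorm.solid (by rwa [abs_of_nonneg hx])
  calc |f z| = ‖f z‖ := (Real.norm_eq_abs _).symm
    _ ≤ ‖f‖ * ‖z‖ := f.le_opNorm z
    _ ≤ ‖f‖ * ‖x‖ := by gcongr

lemma dualAbs_mono (f : E →L[ℝ] ℝ) {x y : E} (hx : 0 ≤ x) (hxy : x ≤ y) :
    dualAbs f x ≤ dualAbs f y :=
  dualAbs_le f hx fun _z hz => abs_le_dualAbs f (hz.trans hxy)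

lemma dualAbs_zero (f : E →L[ℝ] ℝ) : dualAbs f 0 = 0 := by
  refine le_antisymm (dualAbs_le f le_rfl fun z hz => ?_) (dualAbs_nonneg f le_rfl)
  have hz1 : z ≤ 0 := le_trans (le_abs_self z) hz
  have hz2 : -z ≤ 0 := le_trans (neg_le_abs z) hz
  have : z = 0 := le_antisymm hz1 (by simpa using hz2)
  simp [this]

set_option maxHeartbeats 1000000 in
lemma dualAbs_add (f : E →L[ℝ] ℝ) {x y : E} (hx : 0 ≤ x) (hy : 0 ≤ y) :
    dualAbs f (x + y) = dualAbs f x + dualAbs f y := by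
  have hxy : (0 : E) ≤ x + y := add_nonneg hx hy
  refine le_antisymm ?_ ?_
  · refine dualAbs_le f hxy fun z hz => ?_
    set u : E := (z ⊔ -x) ⊓ x with hu_def
    set v : E := z - u with hv_def
    have hxu : -x ≤ u := le_inf le_sup_right (le_trans (neg_nonpos.2 hx) hx)
    have hu : |u| ≤ x := abs_le'.2 ⟨inf_le_right, neg_le.2 (by simpa using hxu)⟩
    have hv_eq : v = (0 ⊓ (z + x)) ⊔ (z - x) := by
      rw [hv_def, hu_def, sub_inf, sub_sup, sub_self, sub_neg_eq_add]
    have hzxy : z ≤ x + y := le_trans (le_abs_self z) hz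
    have hnzxy : -(x + y) ≤ z := neg_le.1 (le_trans (neg_le_abs z) hz)
    have hv_le : v ≤ y := by
      rw [hv_eq]
      refine sup_le (le_trans inf_le_left hy) ?_
      rwa [sub_le_iff_le_add, add_comm]
    have hv_ge : -y ≤ v := by
      rw [hv_eq]
      refine le_trans (le_inf (neg_nonpos.2 hy) ?_) le_sup_left
      have h1 : -(x + y) + x ≤ z + x := by gcongr
      calc -y = -(x + y) + x := by abel
        _ ≤ z + x := h1
    have hv : |v| ≤ y := abs_le'.2 ⟨hv_le, neg_le.2 (by simpa using hv_ge)⟩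
    have huv : u + v = z := by rw [hv_def]; abel
    calc |f z| = |f u + f v| := by rw [← map_add, huv]
      _ ≤ |f u| + |f v| := abs_add_le _ _
      _ ≤ dualAbs f x + dualAbs f y :=
        add_le_add (abs_le_dualAbs f hu) (abs_le_dualAbs f hv)
  · have key : ∀ z1 z2 : E, |z1| ≤ x → |z2| ≤ y →
        |f z1| + |f z2| ≤ dualAbs f (x + y) := by
      intro z1 z2 h1 h2
      have hwgen : ∀ z : E, ∃ w : E, |w| = |z| ∧ f w = |f z| := by
        intro z
        rcases le_or_gt 0 (f z) with h | h
        · exact ⟨z, rfl, (abs_of_nonneg h).symm⟩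
        · refine ⟨-z, ?_, ?_⟩
          · rw [abs_neg]
          · rw [map_neg, abs_of_neg h]
      have hw1 := hwgen z1
      have hw2 := hwgen z2
      obtain ⟨w1, haw1, hfw1⟩ := hw1
      obtain ⟨w2, haw2, hfw2⟩ := hw2
      have habs : |w1 + w2| ≤ x + y := by
        calc |w1 + w2| ≤ |w1| + |w2| := abs_add_le _ _
          _ = |z1| + |z2| := by rw [haw1, haw2]
          _ ≤ x + y := add_le_add h1 h2
      have heq : |f z1| + |f z2| = |f (w1 + w2)| := by
        rw [map_add, hfw1, hfw2]
        exact (abs_of_nonneg (add_nonneg (abs_nonneg (f z1)) (abs_nonneg (f z2)))).symm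
      rw [heq]
      exact abs_le_dualAbs f habs
    have h1 : dualAbs f x ≤ dualAbs f (x + y) - dualAbs f y := by
      refine dualAbs_le f hx fun z1 hz1 => ?_
      rw [le_sub_iff_add_le, add_comm]
      have : dualAbs f y ≤ dualAbs f (x + y) - |f z1| := by
        refine dualAbs_le f hy fun z2 hz2 => ?_
        have := key z1 z2 hz1 hz2
        linarith
      linarith
    linarith

lemma dualAbs_diff (f : E →L[ℝ] ℝ) {a b c d : E} (ha : 0 ≤ a) (hb : 0 ≤ b)
    (hc : 0 ≤ c) (hd : 0 ≤ d) (h : a - b = c - d) :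
    dualAbs f a - dualAbs f b = dualAbs f c - dualAbs f d := by
  have h' : a + d = c + b := sub_eq_sub_iff_add_eq_add.1 h
  have := congrArg (dualAbs f) h'
  rw [dualAbs_add f ha hd, dualAbs_add f hc hb] at this
  linarith

/-- The modulus functional, as a plain function. -/
def preAbs (f : E →L[ℝ] ℝ) : E → ℝ := fun x => dualAbs f x⁺ - dualAbs f x⁻

lemma preAbs_add (f : E →L[ℝ] ℝ) (x y : E) :
    preAbs f (x + y) = preAbs f x + preAbs f y := by
  have hkey : dualAbs f (x + y)⁺ - dualAbs f (x + y)⁻ =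
      dualAbs f (x⁺ + y⁺) - dualAbs f (x⁻ + y⁻) := by
    refine dualAbs_diff f (posPart_nonneg _) (negPart_nonneg _)
      (add_nonneg (posPart_nonneg _) (posPart_nonneg _))
      (add_nonneg (negPart_nonneg _) (negPart_nonneg _)) ?_
    rw [posPart_sub_negPart,
      show x⁺ + y⁺ - (x⁻ + y⁻) = (x⁺ - x⁻) + (y⁺ - y⁻) by abel,
      posPart_sub_negPart, posPart_sub_negPart]
  unfold preAbs
  rw [hkey, dualAbs_add f (posPart_nonneg _) (posPart_nonneg _),
    dualAbs_add f (negPart_nonneg _) (negPart_nonneg _)]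
  ring

omit [NormedSpace ℝ E] in
lemma posPart_le_abs' (x : E) : x⁺ ≤ |x| := by
  rw [posPart_def]
  exact sup_le (le_abs_self x) (abs_nonneg x)

omit [NormedSpace ℝ E] in
lemma negPart_le_abs' (x : E) : x⁻ ≤ |x| := by
  rw [negPart_def]
  exact sup_le (neg_le_abs x) (abs_nonneg x)

lemma preAbs_bound (f : E →L[ℝ] ℝ) (x : E) : |preAbs f x| ≤ 2 * ‖f‖ * ‖x‖ := by
  have h1 : 0 ≤ dualAbs f x⁺ := dualAbs_nonneg f (posPart_nonneg x)
  have h2 : 0 ≤ dualAbs f x⁻ := dualAbs_nonneg f (negPart_nonneg x)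
  have hb1 : dualAbs f x⁺ ≤ ‖f‖ * ‖x‖ := by
    refine le_trans (dualAbs_le_opNorm f (posPart_nonneg x)) ?_
    have h : ‖x⁺‖ ≤ ‖x‖ := by
      refine HasSolidNorm.solid ?_
      rw [abs_of_nonneg (posPart_nonneg x)]
      exact posPart_le_abs' x
    gcongr
  have hb2 : dualAbs f x⁻ ≤ ‖f‖ * ‖x‖ := by
    refine le_trans (dualAbs_le_opNorm f (negPart_nonneg x)) ?_
    have h : ‖x⁻‖ ≤ ‖x‖ := by
      refine HasSolidNorm.solid ?_
      rw [abs_of_nonneg (negPart_nonneg x)]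
      exact negPart_le_abs' x
    gcongr
  rw [preAbs, abs_le]
  constructor <;> nlinarith [norm_nonneg x, norm_nonneg f]

/-- The modulus as a continuous linear functional. -/
def absCLM (f : E →L[ℝ] ℝ) : E →L[ℝ] ℝ :=
  AddMonoidHom.toRealLinearMap (AddMonoidHom.mk' (preAbs f) (preAbs_add f))
    (by
      have hlip : LipschitzWith ((2 * ‖f‖).toNNReal) (preAbs f) := by
        refine LipschitzWith.of_dist_le_mul fun a b => ?_
        have hab : preAbs f a - preAbs f b = preAbs f (a - b) := by
          have := preAbs_add f (a - b) b
          simp only [sub_add_cancel] at this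
          linarith
        rw [Real.dist_eq, hab, dist_eq_norm,
          Real.coe_toNNReal _ (by positivity)]
        exact preAbs_bound f (a - b)
      exact hlip.continuous)

lemma absCLM_apply (f : E →L[ℝ] ℝ) (x : E) :
    absCLM f x = dualAbs f x⁺ - dualAbs f x⁻ := rfl

lemma absCLM_of_nonneg (f : E →L[ℝ] ℝ) {x : E} (hx : 0 ≤ x) :
    absCLM f x = dualAbs f x := by
  rw [absCLM_apply, posPart_eq_self.2 hx, negPart_eq_zero.2 hx, dualAbs_zero, sub_zero]

lemma abs_absCLM_le (f : E →L[ℝ] ℝ) (z : E) : |absCLM f z| ≤ dualAbs f |z| := by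
  rw [absCLM_apply]
  have h1 : dualAbs f z⁺ ≤ dualAbs f |z| :=
    dualAbs_mono f (posPart_nonneg z) (posPart_le_abs' z)
  have h2 : dualAbs f z⁻ ≤ dualAbs f |z| :=
    dualAbs_mono f (negPart_nonneg z) (negPart_le_abs' z)
  have h3 : 0 ≤ dualAbs f z⁺ := dualAbs_nonneg f (posPart_nonneg z)
  have h4 : 0 ≤ dualAbs f z⁻ := dualAbs_nonneg f (negPart_nonneg z)
  rw [abs_le]
  constructor <;> linarith

lemma dualAbs_absCLM (f : E →L[ℝ] ℝ) {x : E} (hx : 0 ≤ x) :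
    dualAbs (absCLM f) x = dualAbs f x := by
  refine le_antisymm ?_ ?_
  · exact dualAbs_le (absCLM f) hx fun z hz =>
      (abs_absCLM_le f z).trans (dualAbs_mono f (abs_nonneg z) hz)
  · refine dualAbs_le f hx fun z hz => ?_
    have h1 : |f z| ≤ dualAbs f |z| := abs_le_dualAbs f le_rfl
    have h4 : 0 ≤ absCLM f |z| := by
      rw [absCLM_of_nonneg f (abs_nonneg z)]
      exact dualAbs_nonneg f (abs_nonneg z)
    have h3 : abs (absCLM f |z|) ≤ dualAbs (absCLM f) x :=
      abs_le_dualAbs (absCLM f) (by rwa [abs_of_nonneg (abs_nonneg z)])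
    calc |f z| ≤ dualAbs f |z| := h1
      _ = abs (absCLM f |z|) := by
        rw [absCLM_of_nonneg f (abs_nonneg z)]
        exact (abs_of_nonneg (dualAbs_nonneg f (abs_nonneg z))).symm
      _ ≤ dualAbs (absCLM f) x := h3

end AlmostLimitedAux

open AlmostLimitedAux in
/-- A positive operator dominated by an almost limited operator into a Banach
lattice with property (d) is itself almost limited. -/
theorem almostLimited_of_dominated
    {E F : Type*} [NormedAddCommGroup E] [Lattice E] [HasSolidNorm E] [IsOrderedAddMonoid E] [NormedSpace ℝ E] [PosSMulStrictMono ℝ E] [PosSMulReflectLT ℝ E]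
    [CompleteSpace E]
    [NormedAddCommGroup F] [Lattice F] [HasSolidNorm F] [IsOrderedAddMonoid F] [NormedSpace ℝ F] [PosSMulStrictMono ℝ F] [PosSMulReflectLT ℝ F] [CompleteSpace F]
    (hF : PropertyD F) (S T : E →L[ℝ] F)
    (hS : IsPositiveOp S) (hTS : IsPositiveOp (T - S)) (hT : AlmostLimited T) :
    AlmostLimited S := by
  intro f hnull hdisj
  set g : ℕ → F →L[ℝ] ℝ := fun n => absCLM (f n) with hg
  have hgnull : WeakStarNull g := by
    intro x
    have h1 := hF f hnull hdisj x⁺ (posPart_nonneg x)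
    have h2 := hF f hnull hdisj x⁻ (negPart_nonneg x)
    have heq : (fun n => g n x) =
        fun n => dualAbs (f n) x⁺ - dualAbs (f n) x⁻ := rfl
    rw [heq]
    simpa using h1.sub h2
  have hgdisj : Pairwise fun n m => DualDisjoint (g n) (g m) := by
    intro n m hnm x hx ε hε
    obtain ⟨y, hy0, hyx, hlt⟩ := hdisj hnm x hx ε hε
    refine ⟨y, hy0, hyx, ?_⟩
    have hxy0 : (0 : F) ≤ x - y := sub_nonneg.2 hyx
    show dualAbs (absCLM (f n)) y + dualAbs (absCLM (f m)) (x - y) < ε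
    rwa [dualAbs_absCLM _ hy0, dualAbs_absCLM _ hxy0]
  have hTg := hT g hgnull hgdisj
  refine squeeze_zero (fun n => norm_nonneg _) (fun n => ?_) hTg
  refine ContinuousLinearMap.opNorm_le_bound _ (norm_nonneg _) fun x => ?_
  have habsx : (0 : F) ≤ S |x| := hS |x| (abs_nonneg x)
  have hSx : |S x| ≤ S |x| := by
    refine abs_le'.2 ⟨?_, ?_⟩
    · have h := hS (|x| - x) (sub_nonneg.2 (le_abs_self x))
      rw [map_sub] at h
      exact sub_nonneg.1 h
    · have hx0 : (0 : E) ≤ |x| + x := by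
        rw [← sub_neg_eq_add]
        exact sub_nonneg.2 (neg_le_abs x)
      have h := hS (|x| + x) hx0
      rw [map_add] at h
      have h' : (0 : F) ≤ S |x| - -(S x) := by rwa [sub_neg_eq_add]
      exact sub_nonneg.1 h'
  have hST : S |x| ≤ T |x| := by
    have h := hTS |x| (abs_nonneg x)
    rw [ContinuousLinearMap.sub_apply] at h
    exact sub_nonneg.1 h
  have hTabs : (0 : F) ≤ T |x| := habsx.trans hST
  calc ‖((f n).comp S) x‖ = |f n (S x)| := Real.norm_eq_abs _
    _ ≤ dualAbs (f n) (S |x|) := abs_le_dualAbs _ hSx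
    _ ≤ dualAbs (f n) (T |x|) := dualAbs_mono _ habsx hST
    _ = g n (T |x|) := (absCLM_of_nonneg _ hTabs).symm
    _ ≤ ‖((g n).comp T) |x|‖ := by
        rw [ContinuousLinearMap.comp_apply, Real.norm_eq_abs]
        exact le_abs_self _
    _ ≤ ‖(g n).comp T‖ * ‖|x|‖ := ((g n).comp T).le_opNorm |x|
    _ = ‖(g n).comp T‖ * ‖x‖ := by rw [norm_abs_eq_norm]
end
end
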